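/- arXiv:1606.08991 — 9 statements merged into one kernel-verified Lean document; each statement's English description precedes it below -/
import Mathlib

section
/- In a gcd-monoid, any two elements admitting a common right multiple admit a right lcm, and any two elements admitting a common left multiple admit a left lcm. -/
namespace MFR

variable {M : Type*} [Monoid M]

/-- `a` left-divides `b`. -/
def LeftDvd (a b : M) : Prop := ∃ x, a * x = b

/-- `a` right-divides `b`. -/
def RightDvd (a b : M) : Prop := ∃ x, x * a = b

/-- `m` is a right lcm of `a` and `b`. -/
def IsRightLcm (a b m : M) : Prop :=
  LeftDvd a m ∧ LeftDvd b m ∧ ∀ m', LeftDvd a m' → LeftDvd b m' → LeftDvd m m'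

/-- `m` is a left lcm of `a` and `b`. -/
def IsLeftLcm (a b m : M) : Prop :=
  RightDvd a m ∧ RightDvd b m ∧ ∀ m', RightDvd a m' → RightDvd b m' → RightDvd m m'

/-- `d` is a left gcd of `a` and `b`. -/
def IsLeftGcd (a b d : M) : Prop :=
  LeftDvd d a ∧ LeftDvd d b ∧ ∀ e, LeftDvd e a → LeftDvd e b → LeftDvd e d

/-- `d` is a right gcd of `a` and `b`. -/
def IsRightGcd (a b d : M) : Prop :=
  RightDvd d a ∧ RightDvd d b ∧ ∀ e, RightDvd e a → RightDvd e b → RightDvd e d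

/-- A gcd-monoid: cancellative, no nontrivial invertible elements,
left and right gcds exist. -/
structure IsGcdMon (M : Type*) [Monoid M] : Prop where
  mul_left_cancel : ∀ a b c : M, a * b = a * c → b = c
  mul_right_cancel : ∀ a b c : M, b * a = c * a → b = c
  unit_eq_one : ∀ a : M, IsUnit a → a = 1
  exists_leftGcd : ∀ a b : M, ∃ d, IsLeftGcd a b d
  exists_rightGcd : ∀ a b : M, ∃ d, IsRightGcd a b d

/-- Proper left divisibility: `a < b`. -/
def PLDvd (a b : M) : Prop := ∃ x, ¬ IsUnit x ∧ a * x = b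

/-- Proper right divisibility. -/
def PRDvd (a b : M) : Prop := ∃ x, ¬ IsUnit x ∧ x * a = b

/-- Noetherian: proper left and right divisibility are well-founded. -/
def Noeth (M : Type*) [Monoid M] : Prop :=
  WellFounded (PLDvd (M := M)) ∧ WellFounded (PRDvd (M := M))

/-- Proper factor relation. -/
def Factor (a b : M) : Prop := ∃ x y, x * a * y = b ∧ (¬ IsUnit x ∨ ¬ IsUnit y)

/-- Atoms: not a product of two non-invertible elements. -/
def Atomic (a : M) : Prop := ¬ IsUnit a ∧ ∀ x y, a = x * y → IsUnit x ∨ IsUnit y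

/-- Existence of a common right multiple. -/
def CommonRightMul (a b : M) : Prop := ∃ m, LeftDvd a m ∧ LeftDvd b m

/-- Existence of a common left multiple. -/
def CommonLeftMul (a b : M) : Prop := ∃ m, RightDvd a m ∧ RightDvd b m

/-- The 3-Ore condition. -/
def ThreeOre (M : Type*) [Monoid M] : Prop :=
  (∀ a b c : M, CommonRightMul a b → CommonRightMul a c → CommonRightMul b c →
    ∃ m, LeftDvd a m ∧ LeftDvd b m ∧ LeftDvd c m) ∧
  (∀ a b c : M, CommonLeftMul a b → CommonLeftMul a c → CommonLeftMul b c →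
    ∃ m, RightDvd a m ∧ RightDvd b m ∧ RightDvd c m)

/-- The product of two multifractions. -/
def fprod : List M → List M → List M
  | [], b => b
  | a, [] => a
  | a, h :: t =>
    if a.length % 2 = 1 then a.dropLast ++ ((a.getLast?.getD 1) * h) :: t
    else a ++ h :: t

/-- The congruence `≃` on multifractions generated by `(1,∅)`, `(a/a,∅)`, `(1/a/a,∅)`. -/
inductive SimEq : List M → List M → Prop
  | one : SimEq [1] []
  | divPos (a : M) : SimEq [a, a] []
  | divNeg (a : M) : SimEq [1, a, a] []
  | refl (a : List M) : SimEq a a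
  | symm {a b} : SimEq a b → SimEq b a
  | trans {a b c} : SimEq a b → SimEq b c → SimEq a c
  | mul {a b c d} : SimEq a b → SimEq c d → SimEq (fprod a c) (fprod b d)

/-- The reduction rule `R_{i,x}` on multifractions (entries indexed from 1):
`Reduce i x a b` means `b = a • R_{i,x}`. -/
def Reduce (i : ℕ) (x : M) (a b : List M) : Prop :=
  (i = 1 ∧ ∃ (a₁ a₂ b₁ b₂ : M) (s : List M),
    a = a₁ :: a₂ :: s ∧ b = b₁ :: b₂ :: s ∧ b₁ * x = a₁ ∧ b₂ * x = a₂) ∨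
  (2 ≤ i ∧ i % 2 = 0 ∧ ∃ (p s : List M) (am ai ap bi bp x' : M),
    p.length = i - 2 ∧
    a = p ++ am :: ai :: ap :: s ∧
    b = p ++ (am * x') :: bi :: bp :: s ∧
    IsRightLcm x ai (x * bi) ∧ x * bi = ai * x' ∧ x * bp = ap) ∨
  (3 ≤ i ∧ i % 2 = 1 ∧ ∃ (p s : List M) (am ai ap bi bp x' : M),
    p.length = i - 2 ∧
    a = p ++ am :: ai :: ap :: s ∧
    b = p ++ (x' * am) :: bi :: bp :: s ∧
    IsLeftLcm x ai (bi * x) ∧ bi * x = x' * ai ∧ bp * x = ap)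

/-- One-step reduction. -/
def Red (a b : List M) : Prop := ∃ i x, x ≠ (1 : M) ∧ Reduce i x a b

/-- Reflexive-transitive closure of one-step reduction. -/
def RedStar : List M → List M → Prop := Relation.ReflTransGen Red

/-- Irreducible multifractions. -/
def RIrred (a : List M) : Prop := ∀ b, ¬ Red a b

/-- Right basic elements: closure of the atoms under right complement. -/
inductive RightBasic : M → Prop
  | atom {a : M} : Atomic a → RightBasic a
  | compl {a b a' : M} : RightBasic a → RightBasic b →
      IsRightLcm a b (b * a') → RightBasic a'

/-- Minimal number of atoms needed to express `a`. -/
noncomputable def atomLen (a : M) : ℕ :=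
  sInf {n | ∃ l : List M, (∀ x ∈ l, Atomic x) ∧ l.length = n ∧ l.prod = a}


/-- In a gcd-monoid, any two elements admitting a common right
multiple admit a right lcm, and any two elements admitting a common left
multiple admit a left lcm. -/
theorem stmt_1 {M : Type*} [Monoid M] (h : IsGcdMon M) :
    (∀ a b : M, CommonRightMul a b → ∃ m, IsRightLcm a b m) ∧
    (∀ a b : M, CommonLeftMul a b → ∃ m, IsLeftLcm a b m) := by
  constructor
  · rintro a b ⟨c, ⟨x, hax⟩, ⟨y, hby⟩⟩
    obtain ⟨d, ⟨x', hx'⟩, ⟨y', hy'⟩, hd⟩ := h.exists_rightGcd x y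
    refine ⟨a * x', ⟨x', rfl⟩, ⟨y', ?_⟩, ?_⟩
    · apply h.mul_right_cancel d
      rw [mul_assoc, mul_assoc, hx', hy', hax, hby]
    · rintro m' ⟨u, hu⟩ ⟨v, hv⟩
      obtain ⟨g, ⟨t, hgt⟩, ⟨t', hgt'⟩, hg⟩ := h.exists_leftGcd c m'
      obtain ⟨u', hau'⟩ := hg a ⟨x, hax⟩ ⟨u, hu⟩
      obtain ⟨v', hbv'⟩ := hg b ⟨y, hby⟩ ⟨v, hv⟩
      have hut : u' * t = x := by
        apply h.mul_left_cancel a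
        rw [← mul_assoc, hau', hgt, hax]
      have hvt : v' * t = y := by
        apply h.mul_left_cancel b
        rw [← mul_assoc, hbv', hgt, hby]
      obtain ⟨e, het⟩ := hd t ⟨u', hut⟩ ⟨v', hvt⟩
      have hme : a * x' * e = g := by
        apply h.mul_right_cancel t
        rw [mul_assoc, het, mul_assoc, hx', hax, hgt]
      exact ⟨e * t', by rw [← mul_assoc, hme, hgt']⟩
  · rintro a b ⟨c, ⟨x, hax⟩, ⟨y, hby⟩⟩
    obtain ⟨d, ⟨x', hx'⟩, ⟨y', hy'⟩, hd⟩ := h.exists_leftGcd x y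
    refine ⟨x' * a, ⟨x', rfl⟩, ⟨y', ?_⟩, ?_⟩
    · apply h.mul_left_cancel d
      rw [← mul_assoc, ← mul_assoc, hx', hy', hax, hby]
    · rintro m' ⟨u, hu⟩ ⟨v, hv⟩
      obtain ⟨g, ⟨t, hgt⟩, ⟨t', hgt'⟩, hg⟩ := h.exists_rightGcd c m'
      obtain ⟨u', hau'⟩ := hg a ⟨x, hax⟩ ⟨u, hu⟩
      obtain ⟨v', hbv'⟩ := hg b ⟨y, hby⟩ ⟨v, hv⟩
      have hut : t * u' = x := by
        apply h.mul_right_cancel a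
        rw [mul_assoc, hau', hgt, hax]
      have hvt : t * v' = y := by
        apply h.mul_right_cancel b
        rw [mul_assoc, hbv', hgt, hby]
      obtain ⟨e, het⟩ := hd t ⟨u', hut⟩ ⟨v', hvt⟩
      have hme : e * (x' * a) = g := by
        apply h.mul_left_cancel t
        rw [← mul_assoc, ← mul_assoc, het, hx', hax, hgt]
      exact ⟨t' * e, by rw [mul_assoc, hme, hgt']⟩

end MFR
end

section
/- In a gcd-monoid, for all a, b, c: the right lcm a ∨ bc exists if and only if a ∨ b exists and a' ∨ c exists, where a' is defined by a ∨ b = ba'; and in that case, writing a ∨ b = ba' = ab' and a' ∨ c = a'c' = ca'', one has a ∨ bc = a·b'c' = bc·a''. -/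
namespace MFR

variable {M : Type*} [Monoid M]

/-- In a gcd-monoid, a common right multiple implies a right lcm exists. -/
lemma lcm_of_commonRightMul {M : Type*} [Monoid M] (h : IsGcdMon M) {a b : M}
    (hc : CommonRightMul a b) : ∃ m, IsRightLcm a b m := by
  obtain ⟨m, ⟨u, hu⟩, ⟨v, hv⟩⟩ := hc
  obtain ⟨t₀, ⟨s, hs⟩, ⟨s', hs'⟩, ht₀⟩ := h.exists_rightGcd u v
  have key : a * s = b * s' := by
    apply h.mul_right_cancel t₀
    rw [mul_assoc, mul_assoc, hs, hs', hu, hv]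
  refine ⟨a * s, ⟨⟨s, rfl⟩, ⟨s', key.symm⟩, ?_⟩⟩
  rintro m' ⟨x', hx'⟩ ⟨y', hy'⟩
  obtain ⟨g, ⟨p, hp⟩, ⟨q, hq⟩, hg⟩ := h.exists_leftGcd m m'
  obtain ⟨s₁, hs₁⟩ := hg a ⟨u, hu⟩ ⟨x', hx'⟩
  obtain ⟨s₂, hs₂⟩ := hg b ⟨v, hv⟩ ⟨y', hy'⟩
  have hpu : s₁ * p = u := by
    apply h.mul_left_cancel a
    rw [← mul_assoc, hs₁, hp, hu]
  have hpv : s₂ * p = v := by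
    apply h.mul_left_cancel b
    rw [← mul_assoc, hs₂, hp, hv]
  obtain ⟨r, hr⟩ := ht₀ p ⟨s₁, hpu⟩ ⟨s₂, hpv⟩
  have hgr : a * s * r = g := by
    apply h.mul_right_cancel p
    rw [mul_assoc (a * s), hr, mul_assoc, hs, hu, hp]
  exact ⟨r * q, by rw [← mul_assoc, hgr, hq]⟩

/-- The computational half of the iterated lcm law. -/
lemma iterated_lcm {M : Type*} [Monoid M] (h : IsGcdMon M) {a b c a' b' c' a'' : M}
    (h1 : IsRightLcm a b (b * a')) (e1 : b * a' = a * b')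
    (h2 : IsRightLcm a' c (a' * c')) (e2 : a' * c' = c * a'') :
    IsRightLcm a (b * c) (a * (b' * c')) ∧ a * (b' * c') = (b * c) * a'' := by
  have key : a * (b' * c') = (b * c) * a'' := by
    rw [← mul_assoc, ← e1, mul_assoc, e2, ← mul_assoc]
  refine ⟨⟨⟨b' * c', rfl⟩, ⟨a'', key.symm⟩, ?_⟩, key⟩
  rintro m ⟨x, hx⟩ ⟨y, hy⟩
  obtain ⟨t, ht⟩ := h1.2.2 m ⟨x, hx⟩ ⟨c * y, by rw [← mul_assoc, hy]⟩
  have hct : a' * t = c * y := by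
    apply h.mul_left_cancel b
    rw [← mul_assoc, ← mul_assoc, ht, hy]
  obtain ⟨w, hw⟩ := h2.2.2 (a' * t) ⟨t, rfl⟩ ⟨y, hct.symm⟩
  have htw : c' * w = t := by
    apply h.mul_left_cancel a'
    rw [← mul_assoc, hw]
  refine ⟨w, ?_⟩
  calc a * (b' * c') * w = b * a' * c' * w := by rw [← mul_assoc, ← e1]
    _ = b * (a' * (c' * w)) := by rw [mul_assoc, mul_assoc]
    _ = m := by rw [← ht, htw, mul_assoc]

/-- iterated right lcm law. -/
theorem stmt_2 {M : Type*} [Monoid M] (h : IsGcdMon M) (a b c : M) :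
    ((∃ m, IsRightLcm a (b * c) m) ↔
      (∃ a', IsRightLcm a b (b * a') ∧ ∃ m, IsRightLcm a' c m)) ∧
    (∀ a' b' c' a'' : M, IsRightLcm a b (b * a') → b * a' = a * b' →
      IsRightLcm a' c (a' * c') → a' * c' = c * a'' →
      IsRightLcm a (b * c) (a * (b' * c')) ∧ a * (b' * c') = (b * c) * a'') := by
  refine ⟨⟨?_, ?_⟩, fun a' b' c' a'' h1 e1 h2 e2 => iterated_lcm h h1 e1 h2 e2⟩
  · rintro ⟨m, hm⟩
    obtain ⟨y, hy⟩ := hm.2.1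
    have hbm : LeftDvd b m := ⟨c * y, by rw [← mul_assoc, hy]⟩
    obtain ⟨ℓ, hℓ⟩ := lcm_of_commonRightMul h ⟨m, hm.1, hbm⟩
    obtain ⟨a', ha'⟩ := hℓ.2.1
    subst ha'
    refine ⟨a', hℓ, ?_⟩
    obtain ⟨z, hz⟩ := hℓ.2.2 m hm.1 hbm
    have haz : a' * z = c * y := by
      apply h.mul_left_cancel b
      rw [← mul_assoc, ← mul_assoc, hz, hy]
    exact lcm_of_commonRightMul h ⟨a' * z, ⟨z, rfl⟩, ⟨y, haz.symm⟩⟩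
  · rintro ⟨a', h1, m', h2⟩
    obtain ⟨b', hb'⟩ := h1.1
    obtain ⟨c', hc'⟩ := h2.1
    obtain ⟨a'', ha''⟩ := h2.2.1
    subst hc'
    exact ⟨_, (iterated_lcm h h1 hb'.symm h2 ha''.symm).1⟩

end MFR
end

section
/- For a cancellative monoid M, the proper left divisibility relation (a < b iff ax = b for some non-invertible x) is well-founded if and only if there exists a map λ from M to ordinal numbers such that λ(ab) ≥ λ(a) + λ(b) for all a, b and λ(a) > 0 whenever a is not invertible. -/
namespace MFR

variable {M : Type*} [Monoid M]

/-- proper left divisibility is well-founded iff there is an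
ordinal-valued map `lam` with `lam (a*b) ≥ lam a + lam b` and `lam a > 0` for
non-invertible `a`. -/
theorem stmt_3 {M : Type u} [Monoid M]
    (hlc : ∀ a b c : M, a * b = a * c → b = c)
    (hrc : ∀ a b c : M, b * a = c * a → b = c) :
    WellFounded (PLDvd (M := M)) ↔
      ∃ lam : M → Ordinal.{u}, (∀ a b : M, lam a + lam b ≤ lam (a * b)) ∧
        (∀ a : M, ¬ IsUnit a → 0 < lam a) := by
  constructor
  · intro hwf
    -- cancellativity: non-unit stays non-unit after right multiplication
    have hnu : ∀ x b : M, ¬ IsUnit x → ¬ IsUnit (x * b) := by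
      intro x b hx hxb
      apply hx
      obtain ⟨u, hu⟩ := hxb
      have h1 : x * (b * ↑u⁻¹) = 1 := by
        rw [← mul_assoc]; rw [← hu]; exact u.mul_inv
      have h2 : (b * ↑u⁻¹) * x = 1 := by
        apply hlc x
        rw [← mul_assoc, h1, one_mul, mul_one]
      exact ⟨⟨x, b * ↑u⁻¹, h1, h2⟩, rfl⟩
    set lam : M → Ordinal.{u} := fun a => (hwf.apply a).rank with hlam
    have hlt : ∀ {a b : M}, PLDvd a b → lam a < lam b := by
      intro a b h
      have := Acc.rank_lt_of_rel (hwf.apply b) h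
      have he : ((hwf.apply b).inv h) = hwf.apply a := Subsingleton.elim _ _
      rwa [he] at this
    have hmonoR : ∀ {c a : M} (b : M), PLDvd c a → PLDvd c (a * b) := by
      rintro c a b ⟨x, hx, rfl⟩
      exact ⟨x * b, hnu x b hx, (mul_assoc _ _ _).symm⟩
    -- lam a ≤ lam (a * b)
    have hle : ∀ a b : M, lam a ≤ lam (a * b) := by
      intro a
      induction a using hwf.induction with
      | _ a ih =>
        intro b
        show (hwf.apply a).rank ≤ _
        rw [Acc.rank_eq]
        apply Ordinal.iSup_le
        rintro ⟨c, hc⟩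
        have : lam c < lam (a * b) := hlt (hmonoR b hc)
        simpa [Order.succ_le_iff] using this
    refine ⟨lam, ?_, ?_⟩
    · intro a b
      induction b using hwf.induction with
      | _ b ih =>
        rcases eq_or_lt_of_le (zero_le (a := lam b)) with h0 | h0
        · rw [← h0, add_zero]; exact hle a b
        · apply (Ordinal.add_le_iff h0.ne').2
          intro d hd
          have : d < (hwf.apply b).rank := hd
          rw [Acc.rank_eq, Ordinal.lt_iSup_iff] at this
          obtain ⟨⟨c, hc⟩, hdc⟩ := this
          have hdc' : d ≤ lam c := Order.lt_succ_iff.mp hdc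
          obtain ⟨x, hx, hxe⟩ := hc
          have hstep : PLDvd (a * c) (a * b) := ⟨x, hx, by rw [mul_assoc, hxe]⟩
          calc lam a + d ≤ lam a + lam c := add_le_add_right hdc' _
            _ ≤ lam (a * c) := ih c ⟨x, hx, hxe⟩
            _ < lam (a * b) := hlt hstep
    · intro a ha
      rcases eq_or_lt_of_le (zero_le (a := lam a)) with h0 | h0
      · exfalso
        have h1 : PLDvd 1 a := ⟨a, ha, one_mul a⟩
        have := hlt h1
        rw [← h0] at this
        exact (not_lt_zero (a := lam 1)) this
      · exact h0
  · rintro ⟨lam, hadd, hpos⟩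
    apply Subrelation.wf (r := InvImage (· < ·) lam)
    · rintro a b ⟨x, hx, rfl⟩
      show lam a < lam (a * x)
      calc lam a = lam a + 0 := (add_zero _).symm
        _ < lam a + lam x := by
            exact add_lt_add_right (hpos x hx) (lam a)
        _ ≤ lam (a * x) := hadd a x
    · exact InvImage.wf lam (Ordinal.lt_wf)

end MFR
end

section
/- For a cancellative monoid M, the proper factor relation ⊂ (where a ⊂ b iff xay = b holds for some x, y with at least one of x, y not invertible) is well-founded if and only if both the proper left divisibility relation and the proper right divisibility relation on M are well-founded. -/
namespace MFR

variable {M : Type*} [Monoid M]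

/-- the proper factor relation is well-founded iff both proper
left and proper right divisibility are well-founded. -/
theorem stmt_4 {M : Type*} [Monoid M]
    (hlc : ∀ a b c : M, a * b = a * c → b = c)
    (hrc : ∀ a b c : M, b * a = c * a → b = c) :
    WellFounded (Factor (M := M)) ↔
      (WellFounded (PLDvd (M := M)) ∧ WellFounded (PRDvd (M := M))) := by
  constructor
  · intro h
    constructor
    · refine Subrelation.wf ?_ h
      rintro a b ⟨x, hx, hab⟩
      exact ⟨1, x, by simpa using hab, Or.inr hx⟩
    · refine Subrelation.wf ?_ h
      rintro a b ⟨x, hx, hab⟩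
      exact ⟨x, 1, by simpa using hab, Or.inl hx⟩
  · rintro ⟨hL, hR⟩
    -- transfer of accessibility along left multiplication by a unit
    have key : ∀ (u c a : M), IsUnit u → Factor c a → Factor c (u * a) := by
      rintro u c a hu ⟨p, q, hpq, hor⟩
      refine ⟨u * p, q, by rw [← hpq]; simp [mul_assoc], ?_⟩
      rcases hor with hp | hq
      · left
        intro h
        apply hp
        have hpe : p = ↑hu.unit⁻¹ * (u * p) := by
          rw [← mul_assoc]; simp
        rw [hpe]
        exact (hu.unit⁻¹.isUnit).mul h
      · exact Or.inr hq
    have acc_transfer : ∀ (u c : M), IsUnit u →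
        Acc (Factor (M := M)) (u * c) → Acc (Factor (M := M)) c := by
      intro u c hu h
      exact ⟨c, fun d hd => h.inv (key u d c hu hd)⟩
    suffices H : ∀ b a : M, LeftDvd a b → Acc (Factor (M := M)) a by
      exact ⟨fun a => H a a ⟨1, mul_one a⟩⟩
    intro b
    refine hR.induction (C := fun b => ∀ a : M, LeftDvd a b → Acc (Factor (M := M)) a) b ?_
    rintro b IHR a
    refine hL.induction (C := fun a => LeftDvd a b → Acc (Factor (M := M)) a) a ?_
    rintro a IHL ⟨y, hy⟩
    constructor
    rintro c ⟨u, v, huv, hor⟩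
    by_cases hu : IsUnit u
    · have hv : ¬ IsUnit v := hor.resolve_left (not_not_intro hu)
      have h1 : PLDvd (u * c) a := ⟨v, hv, by rw [← huv, mul_assoc]⟩
      have h2 : LeftDvd (u * c) b := ⟨v * y, by rw [← hy, ← huv]; simp [mul_assoc]⟩
      exact acc_transfer u c hu (IHL (u * c) h1 h2)
    · have hPR : PRDvd (c * (v * y)) b := by
        refine ⟨u, hu, ?_⟩
        rw [← hy, ← huv]; simp [mul_assoc]
      exact IHR _ hPR c ⟨v * y, rfl⟩

end MFR
end

section
/- If M is a strongly noetherian gcd-monoid with finite atom set S and (S, R) is a recursive presentation of M, then the word problem for M with respect to S is decidable. -/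
namespace MFR

variable {M : Type*} [Monoid M]

section WordProblemAux

variable {M : Type} [Monoid M]

theorem IsGcdMon.eq_one_of_mul_eq_one (h : IsGcdMon M) {a b : M} (hab : a * b = 1) :
    a = 1 ∧ b = 1 := by
  have hba : b * a = 1 := by
    have : a * (b * a) = a * 1 := by
      rw [mul_one, ← mul_assoc, hab, one_mul]
    exact h.mul_left_cancel _ _ _ this
  have ha : IsUnit a := ⟨⟨a, b, hab, hba⟩, rfl⟩
  have ha1 := h.unit_eq_one a ha
  refine ⟨ha1, ?_⟩
  have := hab
  rw [ha1, one_mul] at this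
  exact this

theorem IsGcdMon.leftDvd_antisymm (h : IsGcdMon M) {a b : M}
    (hab : LeftDvd a b) (hba : LeftDvd b a) : a = b := by
  obtain ⟨x, hx⟩ := hab
  obtain ⟨y, hy⟩ := hba
  have hxy : x * y = 1 := by
    have : a * (x * y) = a * 1 := by rw [mul_one, ← mul_assoc, hx, hy]
    exact h.mul_left_cancel _ _ _ this
  have hx1 := (h.eq_one_of_mul_eq_one hxy).1
  rw [hx1, mul_one] at hx
  exact hx

theorem IsGcdMon.exists_isRightLcm (h : IsGcdMon M) (lam : M → ℕ)
    (hlam : ∀ a b : M, lam a + lam b ≤ lam (a * b))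
    (hlam1 : ∀ a : M, ¬ IsUnit a → 0 < lam a)
    {a b : M} (hcm : CommonRightMul a b) : ∃ m, IsRightLcm a b m := by
  have hwf : WellFounded (PLDvd (M := M)) := by
    refine Subrelation.wf (r := InvImage (· < ·) lam) ?_ (InvImage.wf lam (wellFounded_lt))
    rintro x y ⟨c, hc, rfl⟩
    have h1 := hlam x c
    have h2 := hlam1 c hc
    simpa [InvImage] using by omega
  obtain ⟨L, hL, hmin⟩ := hwf.has_min {m | LeftDvd a m ∧ LeftDvd b m} hcm
  refine ⟨L, hL.1, hL.2, fun m' ham' hbm' => ?_⟩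
  obtain ⟨d, hdL, hdm', hdmax⟩ := h.exists_leftGcd L m'
  have hda : LeftDvd a d := hdmax a hL.1 ham'
  have hdb : LeftDvd b d := hdmax b hL.2 hbm'
  obtain ⟨x, hx⟩ := hdL
  by_cases hxu : IsUnit x
  · rw [h.unit_eq_one x hxu, mul_one] at hx
    rw [← hx]
    exact hdm'
  · exact absurd ⟨x, hxu, hx⟩ (hmin d ⟨hda, hdb⟩)

theorem IsGcdMon.rlcm_leftDvd_iff (h : IsGcdMon M) {a b m b' : M}
    (hm : IsRightLcm a b m) (hb : b * b' = m) (c : M) :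
    LeftDvd a (b * c) ↔ LeftDvd b' c := by
  constructor
  · intro hd
    obtain ⟨y, hy⟩ := hm.2.2 (b * c) hd ⟨c, rfl⟩
    rw [← hb, mul_assoc] at hy
    exact ⟨y, h.mul_left_cancel _ _ _ hy⟩
  · rintro ⟨y, rfl⟩
    obtain ⟨x, hx⟩ := hm.1
    exact ⟨x * y, by rw [← mul_assoc, hx, ← hb, mul_assoc]⟩

end WordProblemAux

section Machine

/-- Words over the atom alphabet. -/
abbrev Wd (n : ℕ) := List (Fin n)

/-- States of the division machine: either an active state (a mode which is
either "evaluate division of `V` into `U`" or "return a result", together with a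
stack of continuation frames), or a final answer. -/
abbrev MSt (n : ℕ) :=
  (((Wd n × Wd n) ⊕ Option (Wd n)) × List (Wd n × Wd n)) ⊕ Option (Wd n)

/-- One step of the subword-reversing division machine. -/
def mstep {n : ℕ} (eT cmT : Fin n → Fin n → Bool) (aT bT : Fin n → Fin n → Wd n)
    (x : MSt n) : MSt n :=
  Sum.casesOn x
    (fun st =>
      Sum.casesOn st.1
        (fun vu =>
          List.casesOn vu.1
            (Sum.inl (Sum.inr (some vu.2), st.2))
            (fun s v₁ =>
              List.casesOn vu.2
                (Sum.inl (Sum.inr none, st.2))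
                (fun t u₁ =>
                  bif eT s t then Sum.inl (Sum.inl (v₁, u₁), st.2)
                  else bif cmT s t then
                    Sum.inl (Sum.inl (bT s t, u₁), (v₁, aT s t) :: st.2)
                  else Sum.inl (Sum.inr none, st.2))))
        (fun res =>
          List.casesOn st.2
            (Sum.inr res)
            (fun fr K =>
              Option.casesOn res
                (Sum.inl (Sum.inr none, K))
                (fun r => Sum.inl (Sum.inl (fr.1, fr.2 ++ r), K)))))
    (fun res => Sum.inr res)

/-- Extract the final answer, if any. -/
def getAns {n : ℕ} (x : MSt n) : Option (Option (Wd n)) :=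
  Sum.casesOn x (fun _ => none) (fun res => some res)

theorem getAns_primrec {n : ℕ} : Primrec (getAns (n := n)) := by
  have h1 : Primrec (fun p : MSt n × ((((Wd n × Wd n) ⊕ Option (Wd n))) × List (Wd n × Wd n)) =>
      (none : Option (Option (Wd n)))) := Primrec.const none
  have h2 : Primrec (fun p : MSt n × Option (Wd n) => (some p.2 : Option (Option (Wd n)))) :=
    Primrec.option_some.comp Primrec.snd
  exact (Primrec.sumCasesOn Primrec.id h1.to₂ h2.to₂).of_eq (fun x => by cases x <;> rfl)

theorem mstep_primrec {n : ℕ} (eT cmT : Fin n → Fin n → Bool)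
    (aT bT : Fin n → Fin n → Wd n) : Primrec (mstep eT cmT aT bT) := by
  have htab : ∀ {α : Type} [Primcodable α] (T : Fin n → Fin n → α)
      {β : Type} [Primcodable β] {f g : β → Fin n},
      Primrec f → Primrec g → Primrec (fun b => T (f b) (g b)) := by
    intro α _ T β _ f g hf hg
    have h1 : Primrec (fun b : β => (T (f b) : Fin n → α)) :=
      Primrec.fin_app.comp (Primrec.const T) hf
    exact Primrec.fin_app.comp h1 hg
  -- contexts
  let C0 := (Wd n × Wd n) × List (Wd n × Wd n)
  let C1 := C0 × (Fin n × Wd n)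
  let C2 := C1 × (Fin n × Wd n)
  -- leaf for V = s::v₁, U = t::u₁
  have hs : Primrec (fun r : C2 => r.1.2.1) := Primrec.fst.comp (Primrec.snd.comp Primrec.fst)
  have hv₁ : Primrec (fun r : C2 => r.1.2.2) := Primrec.snd.comp (Primrec.snd.comp Primrec.fst)
  have ht : Primrec (fun r : C2 => r.2.1) := Primrec.fst.comp Primrec.snd
  have hu₁ : Primrec (fun r : C2 => r.2.2) := Primrec.snd.comp Primrec.snd
  have hK : Primrec (fun r : C2 => r.1.1.2) := Primrec.snd.comp (Primrec.fst.comp Primrec.fst)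
  have hbr1 : Primrec (fun r : C2 => (Sum.inl (Sum.inl (r.1.2.2, r.2.2), r.1.1.2) : MSt n)) :=
    Primrec.sumInl.comp ((Primrec.sumInl.comp (hv₁.pair hu₁)).pair hK)
  have hbr2 : Primrec (fun r : C2 =>
      (Sum.inl (Sum.inl (bT r.1.2.1 r.2.1, r.2.2), (r.1.2.2, aT r.1.2.1 r.2.1) :: r.1.1.2) : MSt n)) :=
    Primrec.sumInl.comp ((Primrec.sumInl.comp ((htab bT hs ht).pair hu₁)).pair
      (Primrec.list_cons.comp (hv₁.pair (htab aT hs ht)) hK))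
  have hbr3 : Primrec (fun r : C2 => (Sum.inl (Sum.inr none, r.1.1.2) : MSt n)) :=
    Primrec.sumInl.comp ((Primrec.sumInr.comp (Primrec.const (none : Option (Wd n)))).pair hK)
  have hleaf := Primrec.cond (htab eT hs ht) hbr1 (Primrec.cond (htab cmT hs ht) hbr2 hbr3)
  -- case on U inside V = s::v₁
  have hUnil : Primrec (fun p : C1 => (Sum.inl (Sum.inr none, p.1.2) : MSt n)) :=
    Primrec.sumInl.comp ((Primrec.sumInr.comp (Primrec.const (none : Option (Wd n)))).pair
      (Primrec.snd.comp Primrec.fst))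
  have hUf : Primrec (fun p : C1 => p.1.1.2) := Primrec.snd.comp (Primrec.fst.comp Primrec.fst)
  have hcaseU := Primrec.list_casesOn hUf hUnil hleaf.to₂
  -- case on V
  have hVnil : Primrec (fun q : C0 => (Sum.inl (Sum.inr (some q.1.2), q.2) : MSt n)) :=
    Primrec.sumInl.comp ((Primrec.sumInr.comp
      (Primrec.option_some.comp (Primrec.snd.comp Primrec.fst))).pair Primrec.snd)
  have hVf : Primrec (fun q : C0 => q.1.1) := Primrec.fst.comp Primrec.fst
  have hcaseV := Primrec.list_casesOn hVf hVnil hcaseU.to₂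
  -- return mode
  let D0 := Option (Wd n) × List (Wd n × Wd n)
  let D1 := D0 × ((Wd n × Wd n) × List (Wd n × Wd n))
  let D2 := D1 × Wd n
  have hretnone : Primrec (fun p : D1 => (Sum.inl (Sum.inr none, p.2.2) : MSt n)) :=
    Primrec.sumInl.comp ((Primrec.sumInr.comp (Primrec.const (none : Option (Wd n)))).pair
      (Primrec.snd.comp Primrec.snd))
  have hretsome : Primrec (fun w : D2 =>
      (Sum.inl (Sum.inl (w.1.2.1.1, w.1.2.1.2 ++ w.2), w.1.2.2) : MSt n)) :=
    Primrec.sumInl.comp ((Primrec.sumInl.comp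
      ((Primrec.fst.comp (Primrec.fst.comp (Primrec.snd.comp Primrec.fst))).pair
        (Primrec.list_append.comp
          (Primrec.snd.comp (Primrec.fst.comp (Primrec.snd.comp Primrec.fst)))
          Primrec.snd))).pair
      (Primrec.snd.comp (Primrec.snd.comp Primrec.fst)))
  have hres : Primrec (fun p : D1 => p.1.1) := Primrec.fst.comp Primrec.fst
  have hcaseRes := Primrec.option_casesOn hres hretnone hretsome.to₂
  have hKnil : Primrec (fun q : D0 => (Sum.inr q.1 : MSt n)) := Primrec.sumInr.comp Primrec.fst
  have hcaseK := Primrec.list_casesOn (Primrec.snd : Primrec (fun q : D0 => q.2)) hKnil hcaseRes.to₂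
  -- mode case
  let E0 := MSt n × ((((Wd n × Wd n) ⊕ Option (Wd n))) × List (Wd n × Wd n))
  have hmode : Primrec (fun p : E0 => p.2.1) := Primrec.fst.comp Primrec.snd
  have hstk : Primrec (fun p : E0 => p.2.2) := Primrec.snd.comp Primrec.snd
  have hevf : Primrec (fun p : E0 × (Wd n × Wd n) => ((p.2, p.1.2.2) : C0)) :=
    Primrec.snd.pair (hstk.comp Primrec.fst)
  have hretf : Primrec (fun p : E0 × Option (Wd n) => ((p.2, p.1.2.2) : D0)) :=
    Primrec.snd.pair (hstk.comp Primrec.fst)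
  have hcaseMode := Primrec.sumCasesOn hmode (hcaseV.comp hevf).to₂ (hcaseK.comp hretf).to₂
  have hfin : Primrec (fun p : MSt n × Option (Wd n) => (Sum.inr p.2 : MSt n)) :=
    Primrec.sumInr.comp Primrec.snd
  have htop := Primrec.sumCasesOn (Primrec.id : Primrec (fun x : MSt n => x))
    hcaseMode.to₂ hfin.to₂
  exact htop.of_eq (fun x => by
    rcases x with ⟨vu | res, K⟩ | res
    · rcases vu with ⟨V, U⟩
      cases V <;> cases U <;> rfl
    · cases K <;> cases res <;> rfl
    · rfl)

end Machine

section MachineEval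

theorem machine_eval {M : Type} [Monoid M] (h : IsGcdMon M)
    (lam : M → ℕ) (hlam : ∀ a b : M, lam a + lam b ≤ lam (a * b))
    {n : ℕ} (π : FreeMonoid (Fin n) →* M)
    (hatom1 : ∀ s : Fin n, ¬ IsUnit (π (FreeMonoid.of s)))
    (hlamS : ∀ s : Fin n, 0 < lam (π (FreeMonoid.of s)))
    (eT cmT : Fin n → Fin n → Bool) (aT bT : Fin n → Fin n → Wd n)
    (heT : ∀ s t, eT s t = true → π (FreeMonoid.of s) = π (FreeMonoid.of t))
    (hcmT : ∀ s t, CommonRightMul (π (FreeMonoid.of s)) (π (FreeMonoid.of t)) → cmT s t = true)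
    (hlcm : ∀ s t, cmT s t = true →
      IsRightLcm (π (FreeMonoid.of s)) (π (FreeMonoid.of t))
        (π (FreeMonoid.of s) * π (FreeMonoid.ofList (aT s t))) ∧
      π (FreeMonoid.of s) * π (FreeMonoid.ofList (aT s t)) =
        π (FreeMonoid.of t) * π (FreeMonoid.ofList (bT s t))) :
    ∀ (N : ℕ) (U : Wd n), lam (π (FreeMonoid.ofList U)) < N →
      ∀ (V : Wd n) (K : List (Wd n × Wd n)),
      ∃ (F : ℕ) (res : Option (Wd n)),
        (mstep eT cmT aT bT)^[F] (Sum.inl (Sum.inl (V, U), K)) = Sum.inl (Sum.inr res, K) ∧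
        (res = none → ¬ LeftDvd (π (FreeMonoid.ofList V)) (π (FreeMonoid.ofList U))) ∧
        (∀ r, res = some r →
          π (FreeMonoid.ofList V) * π (FreeMonoid.ofList r) = π (FreeMonoid.ofList U)) := by
  have pw_nil : π (FreeMonoid.ofList ([] : Wd n)) = 1 := by
    rw [FreeMonoid.ofList_nil, map_one]
  have pw_cons : ∀ (s : Fin n) (w : Wd n),
      π (FreeMonoid.ofList (s :: w)) = π (FreeMonoid.of s) * π (FreeMonoid.ofList w) :=
    fun s w => by rw [FreeMonoid.ofList_cons, map_mul]
  have pw_append : ∀ (v w : Wd n),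
      π (FreeMonoid.ofList (v ++ w)) = π (FreeMonoid.ofList v) * π (FreeMonoid.ofList w) :=
    fun v w => by rw [FreeMonoid.ofList_append, map_mul]
  set G := mstep eT cmT aT bT with hG
  have hit : ∀ (F₁ F₂ : ℕ) (x y z : MSt n), G^[F₁] x = y → G^[F₂] y = z →
      G^[F₂ + F₁] x = z := fun F₁ F₂ x y z h1 h2 => by
    rw [Function.iterate_add_apply, h1, h2]
  intro N
  induction N with
  | zero => intro U hU; omega
  | succ N IH =>
    intro U hU V K
    cases V with
    | nil =>
      refine ⟨1, some U, ?_, by simp, ?_⟩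
      · simp only [Function.iterate_one]; rfl
      · intro r hr
        obtain rfl : U = r := by simpa using hr
        rw [pw_nil, one_mul]
    | cons s v₁ =>
      cases U with
      | nil =>
        refine ⟨1, none, ?_, ?_, by simp⟩
        · simp only [Function.iterate_one]; rfl
        · intro _ hdvd
          obtain ⟨x, hx⟩ := hdvd
          rw [pw_cons, pw_nil, mul_assoc] at hx
          have h1 := (h.eq_one_of_mul_eq_one hx).1
          exact hatom1 s (h1 ▸ isUnit_one)
      | cons t u₁ =>
        have hUe : π (FreeMonoid.ofList (t :: u₁)) =
            π (FreeMonoid.of t) * π (FreeMonoid.ofList u₁) := pw_cons t u₁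
        have hu₁N : lam (π (FreeMonoid.ofList u₁)) < N := by
          have h1 := hlam (π (FreeMonoid.of t)) (π (FreeMonoid.ofList u₁))
          have h2 := hlamS t
          rw [hUe] at hU
          omega
        cases hE : eT s t with
        | true =>
          have hst := heT s t hE
          obtain ⟨F, res, hre, hn, hs'⟩ := IH u₁ hu₁N v₁ K
          have hstep1 : G (Sum.inl (Sum.inl (s :: v₁, t :: u₁), K)) =
              Sum.inl (Sum.inl (v₁, u₁), K) := by
            simp [hG, mstep, hE]
          refine ⟨F + 1, res, ?_, ?_, ?_⟩
          · exact hit 1 F _ _ _ (by simpa only [Function.iterate_one] using hstep1) hre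
          · intro h0 hdvd
            obtain ⟨x, hx⟩ := hdvd
            rw [pw_cons, hUe, ← hst, mul_assoc] at hx
            exact hn h0 ⟨x, h.mul_left_cancel _ _ _ hx⟩
          · intro r hr
            rw [pw_cons, hUe, ← hst, mul_assoc, hs' r hr]
        | false =>
          cases hC : cmT s t with
          | false =>
            refine ⟨1, none, ?_, ?_, by simp⟩
            · simp only [Function.iterate_one]
              simp [hG, mstep, hE, hC]
            · intro _ hdvd
              obtain ⟨x, hx⟩ := hdvd
              rw [pw_cons, mul_assoc] at hx
              have hcm : CommonRightMul (π (FreeMonoid.of s)) (π (FreeMonoid.of t)) :=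
                ⟨π (FreeMonoid.ofList (t :: u₁)), ⟨_, hx⟩, ⟨_, hUe.symm⟩⟩
              rw [hcmT s t hcm] at hC
              exact Bool.noConfusion hC
          | true =>
            obtain ⟨hLcm, hEq⟩ := hlcm s t hC
            have hstep1 : G (Sum.inl (Sum.inl (s :: v₁, t :: u₁), K)) =
                Sum.inl (Sum.inl (bT s t, u₁), (v₁, aT s t) :: K) := by
              simp [hG, mstep, hE, hC]
            obtain ⟨F₁, res₁, hre₁, hn₁, hs₁⟩ := IH u₁ hu₁N (bT s t) ((v₁, aT s t) :: K)
            cases res₁ with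
            | none =>
              have hstep2 : G (Sum.inl (Sum.inr none, (v₁, aT s t) :: K)) =
                  Sum.inl (Sum.inr none, K) := rfl
              have c1 := hit 1 F₁ _ _ _
                (by simpa only [Function.iterate_one] using hstep1) hre₁
              have c2 := hit (F₁ + 1) 1 _ _ _ c1
                (by simpa only [Function.iterate_one] using hstep2)
              refine ⟨1 + (F₁ + 1), none, c2, ?_, by simp⟩
              intro _ hdvd
              obtain ⟨x, hx⟩ := hdvd
              rw [pw_cons, mul_assoc] at hx
              have hsd : LeftDvd (π (FreeMonoid.of s)) (π (FreeMonoid.of t) *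
                  π (FreeMonoid.ofList u₁)) := ⟨_, by rw [hx, hUe]⟩
              have hbd := (h.rlcm_leftDvd_iff hLcm hEq.symm (π (FreeMonoid.ofList u₁))).1 hsd
              exact hn₁ rfl hbd
            | some r =>
              have hβr : π (FreeMonoid.ofList (bT s t)) * π (FreeMonoid.ofList r) =
                  π (FreeMonoid.ofList u₁) := hs₁ r rfl
              have hq : π (FreeMonoid.of s) * π (FreeMonoid.ofList (aT s t ++ r)) =
                  π (FreeMonoid.ofList (t :: u₁)) := by
                rw [pw_append, ← mul_assoc, hEq, mul_assoc, hβr, hUe]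
              have hqN : lam (π (FreeMonoid.ofList (aT s t ++ r))) < N := by
                have h1 := hlam (π (FreeMonoid.of s)) (π (FreeMonoid.ofList (aT s t ++ r)))
                rw [hq] at h1
                have h2 := hlamS s
                omega
              obtain ⟨F₂, res₂, hre₂, hn₂, hs₂⟩ := IH (aT s t ++ r) hqN v₁ K
              have hstep2 : G (Sum.inl (Sum.inr (some r), (v₁, aT s t) :: K)) =
                  Sum.inl (Sum.inl (v₁, aT s t ++ r), K) := rfl
              have c1 := hit 1 F₁ _ _ _
                (by simpa only [Function.iterate_one] using hstep1) hre₁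
              have c2 := hit (F₁ + 1) 1 _ _ _ c1
                (by simpa only [Function.iterate_one] using hstep2)
              have c3 := hit (1 + (F₁ + 1)) F₂ _ _ _ c2 hre₂
              refine ⟨F₂ + (1 + (F₁ + 1)), res₂, c3, ?_, ?_⟩
              · intro h0 hdvd
                obtain ⟨x, hx⟩ := hdvd
                rw [pw_cons, mul_assoc, ← hq] at hx
                exact hn₂ h0 ⟨x, h.mul_left_cancel _ _ _ hx⟩
              · intro r' hr'
                rw [pw_cons, mul_assoc, hs₂ r' hr', hq]

end MachineEval

-- raised limit
set_option maxHeartbeats 1600000 in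
/-- strongly noetherian gcd-monoid, finite atom set, recursive
presentation: the word problem is decidable. -/
theorem stmt_6 {M : Type} [Monoid M] (h : IsGcdMon M)
    (lam : M → ℕ) (hlam : ∀ a b : M, lam a + lam b ≤ lam (a * b))
    (hlam1 : ∀ a : M, ¬ IsUnit a → 0 < lam a)
    (n : ℕ) (π : FreeMonoid (Fin n) →* M)
    (hatoms : ∀ s : Fin n, Atomic (π (FreeMonoid.of s)))
    (hatoms' : ∀ a : M, Atomic a → ∃ s : Fin n, π (FreeMonoid.of s) = a)
    (hgen : Function.Surjective π)
    (R : List (Fin n) × List (Fin n) → Prop) (hR : ComputablePred R)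
    (hpres : ∀ w w' : FreeMonoid (Fin n),
      π w = π w' ↔
        conGen (fun u v : FreeMonoid (Fin n) =>
          R (FreeMonoid.toList u, FreeMonoid.toList v)) w w') :
    ComputablePred fun p : List (Fin n) × List (Fin n) =>
      π (FreeMonoid.ofList p.1) = π (FreeMonoid.ofList p.2) := by
  classical
  have hatom1 : ∀ s : Fin n, ¬ IsUnit (π (FreeMonoid.of s)) := fun s => (hatoms s).1
  have hlamS : ∀ s : Fin n, 0 < lam (π (FreeMonoid.of s)) := fun s => hlam1 _ (hatom1 s)
  -- construction of the finite tables of lcm data for pairs of atoms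
  have hchoice : ∀ s t : Fin n, ∃ q : (Bool × Bool) × (Wd n × Wd n),
      (q.1.1 = true → π (FreeMonoid.of s) = π (FreeMonoid.of t)) ∧
      (CommonRightMul (π (FreeMonoid.of s)) (π (FreeMonoid.of t)) → q.1.2 = true) ∧
      (q.1.2 = true →
        IsRightLcm (π (FreeMonoid.of s)) (π (FreeMonoid.of t))
          (π (FreeMonoid.of s) * π (FreeMonoid.ofList q.2.1)) ∧
        π (FreeMonoid.of s) * π (FreeMonoid.ofList q.2.1) =
          π (FreeMonoid.of t) * π (FreeMonoid.ofList q.2.2)) := by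
    intro s t
    by_cases hcm : CommonRightMul (π (FreeMonoid.of s)) (π (FreeMonoid.of t))
    · obtain ⟨m, hm⟩ := h.exists_isRightLcm lam hlam hlam1 hcm
      obtain ⟨x, hx⟩ := hm.1
      obtain ⟨y, hy⟩ := hm.2.1
      obtain ⟨wx, hwx⟩ := hgen x
      obtain ⟨wy, hwy⟩ := hgen y
      have hwx' : π (FreeMonoid.ofList (FreeMonoid.toList wx)) = x := by
        rw [FreeMonoid.ofList_toList]; exact hwx
      have hwy' : π (FreeMonoid.ofList (FreeMonoid.toList wy)) = y := by
        rw [FreeMonoid.ofList_toList]; exact hwy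
      refine ⟨⟨(decide (π (FreeMonoid.of s) = π (FreeMonoid.of t)), true),
        (FreeMonoid.toList wx, FreeMonoid.toList wy)⟩,
        fun he => of_decide_eq_true he, fun _ => rfl, fun _ => ?_⟩
      constructor
      · rw [hwx', hx]; exact hm
      · rw [hwx', hwy', hx, hy]
    · exact ⟨⟨(decide (π (FreeMonoid.of s) = π (FreeMonoid.of t)), false), ([], [])⟩,
        fun he => of_decide_eq_true he, fun hc => absurd hc hcm,
        fun hf => Bool.noConfusion hf⟩
  choose Q hQ1 hQ2 hQ3 using hchoice
  set eT : Fin n → Fin n → Bool := fun s t => (Q s t).1.1 with heTdef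
  set cmT : Fin n → Fin n → Bool := fun s t => (Q s t).1.2 with hcmTdef
  set aT : Fin n → Fin n → Wd n := fun s t => (Q s t).2.1 with haTdef
  set bT : Fin n → Fin n → Wd n := fun s t => (Q s t).2.2 with hbTdef
  set G := mstep eT cmT aT bT with hGdef
  have hGp : Primrec G := mstep_primrec eT cmT aT bT
  -- the fuel-indexed run function
  set run : (Wd n × Wd n) → ℕ → Option (Option (Wd n)) :=
    fun p F => getAns (G^[F] (Sum.inl (Sum.inl p, []))) with hrundef
  have hrun : Computable₂ run := by
    have hinit : Primrec (fun q : (Wd n × Wd n) × ℕ =>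
        (Sum.inl (Sum.inl q.1, ([] : List (Wd n × Wd n))) : MSt n)) :=
      Primrec.sumInl.comp ((Primrec.sumInl.comp Primrec.fst).pair (Primrec.const []))
    have hiter := Primrec.nat_iterate (Primrec.snd :
        Primrec (fun q : (Wd n × Wd n) × ℕ => q.2)) hinit
      ((hGp.comp Primrec.snd).to₂ :
        Primrec₂ (fun (_ : (Wd n × Wd n) × ℕ) (x : MSt n) => G x))
    exact Primrec₂.to_comp (getAns_primrec.comp hiter)
  -- halting facts
  have hgetAns : ∀ (x : MSt n) (res : Option (Wd n)), getAns x = some res ↔ x = Sum.inr res := by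
    intro x res; cases x <;> simp [getAns]
  have hstay : ∀ (j : ℕ) (a : Option (Wd n)), G^[j] (Sum.inr a) = Sum.inr a := by
    intro j a
    induction j with
    | zero => rfl
    | succ j ih => rw [Function.iterate_succ_apply]; exact ih
  have hmono : ∀ (p : Wd n × Wd n) {a : Option (Wd n)} {m k : ℕ}, m ≤ k →
      a ∈ run p m → a ∈ run p k := by
    intro p a m k hmk ham
    have hm' : G^[m] (Sum.inl (Sum.inl p, [])) = Sum.inr a :=
      (hgetAns _ _).1 (Option.mem_def.1 ham)
    obtain ⟨j, rfl⟩ : ∃ j, k = j + m := ⟨k - m, by omega⟩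
    have hk' : G^[j + m] (Sum.inl (Sum.inl p, [])) = Sum.inr a := by
      rw [Function.iterate_add_apply, hm', hstay]
    exact Option.mem_def.2 ((hgetAns _ _).2 hk')
  -- totality and correctness
  have hDtot : ∀ V U : Wd n, ∃ res : Option (Wd n),
      res ∈ Nat.rfindOpt (run (V, U)) ∧
      (res = none → ¬ LeftDvd (π (FreeMonoid.ofList V)) (π (FreeMonoid.ofList U))) ∧
      (∀ r, res = some r →
        π (FreeMonoid.ofList V) * π (FreeMonoid.ofList r) = π (FreeMonoid.ofList U)) := by
    intro V U
    obtain ⟨F, res, hre, hn, hs'⟩ := machine_eval h lam hlam π hatom1 hlamS eT cmT aT bT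
      (fun s t => hQ1 s t) (fun s t => hQ2 s t) (fun s t => hQ3 s t)
      (lam (π (FreeMonoid.ofList U)) + 1) U (by omega) V []
    refine ⟨res, ?_, hn, hs'⟩
    have hreach : G^[1 + F] (Sum.inl (Sum.inl (V, U), [])) = Sum.inr res := by
      rw [Function.iterate_add_apply, hre]; rfl
    exact (Nat.rfindOpt_mono (fun {a m k} hmk ham => hmono (V, U) hmk ham)).2
      ⟨1 + F, Option.mem_def.2 ((hgetAns _ _).2 hreach)⟩
  -- the partial recursive equality test
  set Dp : (Wd n × Wd n) →. Option (Wd n) := fun p => Nat.rfindOpt (run p) with hDpdef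
  have hDp : Partrec Dp := Partrec.rfindOpt hrun
  set Fp : (Wd n × Wd n) →. Bool := fun p =>
    (Dp p).bind fun r₁ => (Dp (p.2, p.1)).map fun r₂ => r₁.isSome && r₂.isSome with hFpdef
  have hFp : Partrec Fp := by
    refine hDp.bind ?_
    have hAnd : Computable₂ (fun (a : (Wd n × Wd n) × Option (Wd n)) (r₂ : Option (Wd n)) =>
        (a.2.isSome && r₂.isSome : Bool)) := by
      have h1 : Primrec (fun q : ((Wd n × Wd n) × Option (Wd n)) × Option (Wd n) =>
          q.1.2.isSome) := Primrec.option_isSome.comp (Primrec.snd.comp Primrec.fst)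
      have h2 : Primrec (fun q : ((Wd n × Wd n) × Option (Wd n)) × Option (Wd n) =>
          q.2.isSome) := Primrec.option_isSome.comp Primrec.snd
      have hAnd0 : Primrec (fun q : ((Wd n × Wd n) × Option (Wd n)) × Option (Wd n) =>
          (q.1.2.isSome && q.2.isSome : Bool)) :=
        (Primrec.cond h1 h2 (Primrec.const false)).of_eq
          (fun q => by cases hq : q.1.2.isSome <;> simp [hq])
      exact Primrec₂.to_comp hAnd0.to₂
    exact (hDp.comp ((Computable.snd.comp Computable.fst).pair
      (Computable.fst.comp Computable.fst))).map hAnd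
  have hget : ∀ p : Wd n × Wd n,
      (decide (π (FreeMonoid.ofList p.1) = π (FreeMonoid.ofList p.2)) : Bool) ∈ Fp p := by
    intro p
    obtain ⟨r₁, hr₁, hn₁, hs₁⟩ := hDtot p.1 p.2
    obtain ⟨r₂, hr₂, hn₂, hs₂⟩ := hDtot p.2 p.1
    have hval : (decide (π (FreeMonoid.ofList p.1) = π (FreeMonoid.ofList p.2)) : Bool) =
        (r₁.isSome && r₂.isSome) := by
      cases r₁ with
      | none =>
        have hne : π (FreeMonoid.ofList p.1) ≠ π (FreeMonoid.ofList p.2) :=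
          fun he => hn₁ rfl ⟨1, by rw [mul_one, he]⟩
        simp [decide_eq_false hne]
      | some q₁ =>
        cases r₂ with
        | none =>
          have hne : π (FreeMonoid.ofList p.1) ≠ π (FreeMonoid.ofList p.2) :=
            fun he => hn₂ rfl ⟨1, by rw [mul_one, he]⟩
          simp [decide_eq_false hne]
        | some q₂ =>
          have heq : π (FreeMonoid.ofList p.1) = π (FreeMonoid.ofList p.2) :=
            h.leftDvd_antisymm ⟨_, hs₁ q₁ rfl⟩ ⟨_, hs₂ q₂ rfl⟩
          simp [decide_eq_true heq]
    rw [hval]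
    exact Part.mem_bind_iff.2 ⟨r₁, hr₁, (Part.mem_map_iff _).2 ⟨r₂, hr₂, rfl⟩⟩
  have hcomp : Computable (fun p : Wd n × Wd n =>
      (decide (π (FreeMonoid.ofList p.1) = π (FreeMonoid.ofList p.2)) : Bool)) :=
    hFp.of_eq_tot hget
  refine ⟨Classical.decPred _, ?_⟩
  exact hcomp.of_eq (fun p => decide_eq_decide.mpr Iff.rfl)

end MFR
end

section
/- If M is a gcd-monoid and the multifraction b is obtained from a by a reduction rule R_{i,x}, then a ≃ b, i.e., a and b represent the same element of the enveloping group U(M). -/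
namespace MFR

variable {M : Type*} [Monoid M]

section StmtNineHelpers

variable {M₉ : Type*} [Monoid M₉]

lemma fprod_even₉ (p : List M₉) (hp : p.length % 2 = 0) (r : List M₉) :
    fprod p r = p ++ r := by
  match p, r with
  | [], [] => rfl
  | [], h :: t => rfl
  | a :: p', [] => simp [fprod]
  | a :: p', h :: t =>
    show (if (a :: p').length % 2 = 1 then _ else _) = _
    rw [if_neg (by omega)]

lemma fprod_odd₉ (p : List M₉) (hp : p.length % 2 = 1) (h : M₉) (t : List M₉) :
    fprod p (h :: t) = p.dropLast ++ (p.getLast?.getD 1 * h) :: t := by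
  match p with
  | [] => simp at hp
  | a :: p' =>
    show (if (a :: p').length % 2 = 1 then _ else _) = _
    rw [if_pos hp]

lemma dropLast_getLast_cons₉ (a : M₉) (l : List M₉) (r : List M₉) :
    (a :: l).dropLast ++ ((a :: l).getLast?.getD 1) :: r = a :: (l ++ r) := by
  induction l generalizing a with
  | nil => rfl
  | cons b t ih => simpa using ih b

lemma fprod_odd_one₉ (p : List M₉) (hp : p.length % 2 = 1) (r : List M₉) :
    fprod p (1 :: r) = p ++ r := by
  match p with
  | [] => simp at hp
  | a :: p' => rw [fprod_odd₉ _ hp 1 r, mul_one, dropLast_getLast_cons₉]; rfl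

/-- the basic cell `x (b₂ x)⁻¹ ≃ b₂⁻¹`. -/
lemma cell_one₉ (b₂ x : M₉) : SimEq [x, b₂ * x] [(1 : M₉), b₂] := by
  have e1 : SimEq (fprod [(1 : M₉), b₂, b₂] [x, b₂ * x]) (fprod [] [x, b₂ * x]) :=
    SimEq.mul (SimEq.divNeg b₂) (SimEq.refl _)
  have e2 : SimEq (fprod [(1 : M₉), b₂] [b₂ * x, b₂ * x]) (fprod [(1 : M₉), b₂] []) :=
    SimEq.mul (SimEq.refl _) (SimEq.divPos (b₂ * x))
  simp [fprod] at e1 e2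
  exact e1.symm.trans e2

/-- the case `i = 1` cell. -/
lemma cell_L1₉ (b₁ b₂ x : M₉) : SimEq [b₁ * x, b₂ * x] [b₁, b₂] := by
  have e := SimEq.mul (SimEq.refl [b₁]) (cell_one₉ b₂ x)
  simp [fprod] at e
  exact e

/-- core cell for the even (right-lcm) case: given `x * bi = ai * x'`,
`ai⁻¹ x ≃ x' bi⁻¹`. -/
lemma cell_even'₉ {ai x bi x' : M₉} (hx : x * bi = ai * x') :
    SimEq [(1 : M₉), ai, x] [x', bi] := by
  have e1 : SimEq (fprod [(1 : M₉), ai, x] [bi, bi]) (fprod [(1 : M₉), ai, x] []) :=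
    SimEq.mul (SimEq.refl _) (SimEq.divPos bi)
  have e2 : SimEq (fprod [(1 : M₉), ai, ai] [x', bi]) (fprod [] [x', bi]) :=
    SimEq.mul (SimEq.divNeg ai) (SimEq.refl _)
  simp [fprod] at e1 e2
  rw [hx] at e1
  exact e1.symm.trans e2

/-- the even case on a 3-element multifraction. -/
lemma cell_even₉ {ai x bi x' : M₉} (hx : x * bi = ai * x') (am bp : M₉) :
    SimEq [am, ai, x * bp] [am * x', bi, bp] := by
  have c2 := SimEq.mul (SimEq.refl [am]) (cell_even'₉ hx)
  simp [fprod] at c2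
  have e := SimEq.mul c2 (SimEq.refl [bp])
  simp [fprod] at e
  exact e

/-- core cell for the odd (left-lcm) case: given `bi * x = x' * ai`,
`ai x⁻¹ ≃ x'⁻¹ bi`. -/
lemma cell_odd'₉ {ai x bi x' : M₉} (hx : bi * x = x' * ai) :
    SimEq [ai, x] [(1 : M₉), x', bi] := by
  have c1 : SimEq (fprod [(1 : M₉), x', bi] [x, x]) (fprod [(1 : M₉), x', bi] []) :=
    SimEq.mul (SimEq.refl _) (SimEq.divPos x)
  have c2 : SimEq (fprod [(1 : M₉), x', x'] [ai, x]) (fprod [] [ai, x]) :=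
    SimEq.mul (SimEq.divNeg x') (SimEq.refl _)
  simp [fprod] at c1 c2
  rw [hx] at c1
  exact c2.symm.trans c1

/-- the odd case on a 4-element multifraction (with leading `1`). -/
lemma cell_odd₉ {ai x bi x' : M₉} (hx : bi * x = x' * ai) (am bp : M₉) :
    SimEq [(1 : M₉), am, ai, bp * x] [(1 : M₉), x' * am, bi, bp] := by
  -- step A1 : insert [x, x]
  have i1 : SimEq (fprod [(1 : M₉), x, x] [1, bp * x]) (fprod [] [(1 : M₉), bp * x]) :=
    SimEq.mul (SimEq.divNeg x) (SimEq.refl _)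
  simp [fprod] at i1
  have a1 := SimEq.mul (SimEq.refl [(1 : M₉), am, ai]) i1
  simp [fprod] at a1
  -- a1 : SimEq [1, am, ai, x, x, bp*x] [1, am, ai, bp*x]
  -- step A2 : contract the pair (x, bp*x) to (1, bp)
  have a2 := SimEq.mul (SimEq.refl [(1 : M₉), am, ai, x]) (cell_one₉ bp x)
  simp [fprod] at a2
  -- a2 : SimEq [1, am, ai, x, x, bp*x] [1, am, ai, x, 1, bp]
  -- step C : replace (ai, x) by (1, x', bi)
  have c0 := SimEq.mul (SimEq.refl [(1 : M₉), am]) (cell_odd'₉ hx)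
  simp [fprod] at c0
  have c1 := SimEq.mul c0 (SimEq.refl [(1 : M₉), bp])
  simp [fprod] at c1
  -- c1 : SimEq [1, am, ai, x, 1, bp] [1, am, 1, x', bi, bp]
  -- step D : merge (am, 1, x') into (x' * am)
  have d0 : SimEq (fprod [(1 : M₉), am, am] [1, x' * am, bi, bp])
      (fprod [] [(1 : M₉), x' * am, bi, bp]) :=
    SimEq.mul (SimEq.divNeg am) (SimEq.refl _)
  simp [fprod] at d0
  -- d0 : SimEq [1, am, am, x'*am, bi, bp] [1, x'*am, bi, bp]
  have d1 := SimEq.mul (cell_L1₉ 1 x' am) (SimEq.refl [bi, bp])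
  simp [fprod] at d1
  have d2 := SimEq.mul (SimEq.refl [(1 : M₉), am]) d1
  simp [fprod] at d2
  -- d2 : SimEq [1, am, am, x'*am, bi, bp] [1, am, 1, x', bi, bp]
  exact (a1.symm.trans a2).trans (c1.trans (d2.symm.trans d0))

end StmtNineHelpers

/-- reduction is compatible with the congruence `≃`. -/
theorem stmt_9 {M : Type*} [Monoid M] (h : IsGcdMon M) {i : ℕ} {x : M}
    {a b : List M} (hr : Reduce i x a b) : SimEq a b := by
  rcases hr with ⟨-, a₁, a₂, b₁, b₂, s, ha, hb, h1, h2⟩ |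
    ⟨hi2, hie, p, s, am, ai, ap, bi, bp, x', hplen, ha, hb, -, hxbi, hxbp⟩ |
    ⟨hi3, hio, p, s, am, ai, ap, bi, bp, x', hplen, ha, hb, -, hxbi, hxbp⟩
  · subst ha hb
    have e := SimEq.mul (cell_L1₉ b₁ b₂ x) (SimEq.refl s)
    rw [fprod_even₉ _ (by simp) s, fprod_even₉ _ (by simp) s] at e
    rw [← h1, ← h2]
    exact e
  · subst ha hb
    have hp0 : p.length % 2 = 0 := by omega
    have core : SimEq [am, ai, ap] [am * x', bi, bp] := by
      rw [← hxbp]; exact cell_even₉ hxbi am bp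
    have e := SimEq.mul core (SimEq.refl (1 :: s))
    rw [fprod_odd_one₉ _ (by simp), fprod_odd_one₉ _ (by simp)] at e
    simp only [List.cons_append, List.nil_append] at e
    have e' := SimEq.mul (SimEq.refl p) e
    rwa [fprod_even₉ p hp0, fprod_even₉ p hp0] at e'
  · subst ha hb
    have hp1 : p.length % 2 = 1 := by omega
    have core : SimEq [(1 : M), am, ai, ap] [(1 : M), x' * am, bi, bp] := by
      rw [← hxbp]; exact cell_odd₉ hxbi am bp
    have e := SimEq.mul core (SimEq.refl s)
    rw [fprod_even₉ _ (by simp) s, fprod_even₉ _ (by simp) s] at e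
    simp only [List.cons_append, List.nil_append] at e
    have e' := SimEq.mul (SimEq.refl p) e
    rwa [fprod_odd_one₉ p hp1, fprod_odd_one₉ p hp1] at e'

end MFR
end

section
/- If M is a gcd-monoid, the reflexive-transitive closure ⇒* of the one-step reduction relation on multifractions is compatible with the multifraction product: a ⇒* b implies c·a ⇒* c·b and a·c ⇒* b·c for every multifraction c. -/
namespace MFR

variable {M : Type*} [Monoid M]

lemma isLeftLcm_self {x m : M} (h : RightDvd x m) : IsLeftLcm x m m :=
  ⟨h, ⟨1, one_mul m⟩, fun _ _ h2 => h2⟩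

lemma fprod_nil_right (a : List M) : fprod a [] = a := by cases a <;> rfl

lemma fprod_nil_left (b : List M) : fprod [] b = b := by cases b <;> rfl

lemma fprod_cons (a : List M) (ha : a ≠ []) (h : M) (t : List M) :
    fprod a (h :: t) =
      if a.length % 2 = 1 then a.dropLast ++ ((a.getLast?.getD 1) * h) :: t
      else a ++ h :: t := by
  cases a with
  | nil => exact absurd rfl ha
  | cons y ys => rfl

lemma fprod_even (a : List M) (ha : a.length % 2 = 0) (b : List M) :
    fprod a b = a ++ b := by
  cases b with
  | nil => rw [fprod_nil_right, List.append_nil]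
  | cons h t =>
    cases a with
    | nil => rfl
    | cons y ys => rw [fprod_cons _ (by simp) h t, if_neg (by omega)]

lemma fprod_odd (a' : List M) (al : M) (ha : (a' ++ [al]).length % 2 = 1) (h : M) (t : List M) :
    fprod (a' ++ [al]) (h :: t) = a' ++ (al * h) :: t := by
  rw [fprod_cons _ (by simp) h t, if_pos ha, List.dropLast_concat, List.getLast?_concat]
  rfl

lemma reduce_length {i : ℕ} {x : M} {a b : List M} (hr : Reduce i x a b) :
    a.length = b.length := by
  rcases hr with ⟨h1, a1, a2, b1, b2, s, ha, hb, e1, e2⟩ |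
    ⟨h2, hpar, p, s, am, ai, ap, bi, bp, x', hp, ha, hb, h3, h4, h5⟩ |
    ⟨h2, hpar, p, s, am, ai, ap, bi, bp, x', hp, ha, hb, h3, h4, h5⟩ <;>
  subst ha <;> subst hb <;> simp

lemma reduce_append (c : List M) {i : ℕ} {x : M} {a b : List M} (hr : Reduce i x a b) :
    Reduce i x (a ++ c) (b ++ c) := by
  rcases hr with ⟨h1, a1, a2, b1, b2, s, ha, hb, e1, e2⟩ |
    ⟨h2, hpar, p, s, am, ai, ap, bi, bp, x', hp, ha, hb, h3, h4, h5⟩ |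
    ⟨h2, hpar, p, s, am, ai, ap, bi, bp, x', hp, ha, hb, h3, h4, h5⟩
  · exact Or.inl ⟨h1, a1, a2, b1, b2, s ++ c, by simp [ha], by simp [hb], e1, e2⟩
  · exact Or.inr (Or.inl ⟨h2, hpar, p, s ++ c, am, ai, ap, bi, bp, x', hp,
      by simp [ha], by simp [hb], h3, h4, h5⟩)
  · exact Or.inr (Or.inr ⟨h2, hpar, p, s ++ c, am, ai, ap, bi, bp, x', hp,
      by simp [ha], by simp [hb], h3, h4, h5⟩)

lemma red_fprod_right {a b : List M} (hab : Red a b) (c : List M) :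
    Red (fprod a c) (fprod b c) := by
  obtain ⟨i, x, hx, hr⟩ := hab
  have hlen := reduce_length hr
  cases c with
  | nil => rw [fprod_nil_right, fprod_nil_right]; exact ⟨i, x, hx, hr⟩
  | cons h t =>
    by_cases hpar : a.length % 2 = 1
    · rcases hr with ⟨h1, a1, a2, b1, b2, s, ha, hb, e1, e2⟩ |
        ⟨h2, hpar2, p, s, am, ai, ap, bi, bp, x', hp, ha, hb, h3, h4, h5⟩ |
        ⟨h2, hpar2, p, s, am, ai, ap, bi, bp, x', hp, ha, hb, h3, h4, h5⟩
      · subst ha; subst hb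
        rcases s.eq_nil_or_concat with hs | ⟨s', sl, hs⟩
        on_goal 2 => rw [List.concat_eq_append] at hs
        · subst hs; simp at hpar
        · subst hs
          have ea : a1 :: a2 :: (s' ++ [sl]) = (a1 :: a2 :: s') ++ [sl] := by simp
          have eb : b1 :: b2 :: (s' ++ [sl]) = (b1 :: b2 :: s') ++ [sl] := by simp
          rw [ea, eb, fprod_odd _ _ (by simp at hpar ⊢; omega) h t,
            fprod_odd _ _ (by simp at hpar ⊢; omega) h t]
          exact ⟨1, x, hx, Or.inl ⟨rfl, a1, a2, b1, b2, s' ++ (sl * h) :: t,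
            by simp, by simp, e1, e2⟩⟩
      · subst ha; subst hb
        rcases s.eq_nil_or_concat with hs | ⟨s', sl, hs⟩
        on_goal 2 => rw [List.concat_eq_append] at hs
        · subst hs
          have ea : p ++ am :: ai :: ap :: ([] : List M) = (p ++ [am, ai]) ++ [ap] := by simp
          have eb : p ++ (am * x') :: bi :: bp :: ([] : List M)
              = (p ++ [am * x', bi]) ++ [bp] := by simp
          rw [ea, eb, fprod_odd _ _ (by simp at hpar ⊢; omega) h t,
            fprod_odd _ _ (by simp at hpar ⊢; omega) h t]
          exact ⟨i, x, hx, Or.inr (Or.inl ⟨h2, hpar2, p, t, am, ai, ap * h, bi, bp * h, x',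
            hp, by simp, by simp, h3, h4, by rw [← mul_assoc, h5]⟩)⟩
        · subst hs
          have ea : p ++ am :: ai :: ap :: (s' ++ [sl]) = (p ++ am :: ai :: ap :: s') ++ [sl] := by
            simp
          have eb : p ++ (am * x') :: bi :: bp :: (s' ++ [sl])
              = (p ++ (am * x') :: bi :: bp :: s') ++ [sl] := by simp
          rw [ea, eb, fprod_odd _ _ (by simp at hpar ⊢; omega) h t,
            fprod_odd _ _ (by simp at hpar ⊢; omega) h t]
          exact ⟨i, x, hx, Or.inr (Or.inl ⟨h2, hpar2, p, s' ++ (sl * h) :: t, am, ai, ap, bi,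
            bp, x', hp, by simp, by simp, h3, h4, h5⟩)⟩
      · subst ha; subst hb
        rcases s.eq_nil_or_concat with hs | ⟨s', sl, hs⟩
        on_goal 2 => rw [List.concat_eq_append] at hs
        · subst hs; simp at hpar; omega
        · subst hs
          have ea : p ++ am :: ai :: ap :: (s' ++ [sl]) = (p ++ am :: ai :: ap :: s') ++ [sl] := by
            simp
          have eb : p ++ (x' * am) :: bi :: bp :: (s' ++ [sl])
              = (p ++ (x' * am) :: bi :: bp :: s') ++ [sl] := by simp
          rw [ea, eb, fprod_odd _ _ (by simp at hpar ⊢; omega) h t,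
            fprod_odd _ _ (by simp at hpar ⊢; omega) h t]
          exact ⟨i, x, hx, Or.inr (Or.inr ⟨h2, hpar2, p, s' ++ (sl * h) :: t, am, ai, ap, bi,
            bp, x', hp, by simp, by simp, h3, h4, h5⟩)⟩
    · rw [fprod_even a (by omega) _, fprod_even b (by omega) _]
      exact ⟨i, x, hx, reduce_append _ hr⟩

lemma red_fprod_left {a b : List M} (hab : Red a b) (c : List M) :
    Red (fprod c a) (fprod c b) := by
  obtain ⟨i, x, hx, hr⟩ := hab
  rcases c.eq_nil_or_concat with hc | ⟨c', cl, hc⟩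
  · subst hc; rw [fprod_nil_left, fprod_nil_left]; exact ⟨i, x, hx, hr⟩
  rw [List.concat_eq_append] at hc; subst hc
  by_cases hcpar : (c' ++ [cl]).length % 2 = 1
  · rcases hr with ⟨h1, a1, a2, b1, b2, s, ha, hb, e1, e2⟩ |
      ⟨h2, hpar2, p, s, am, ai, ap, bi, bp, x', hp, ha, hb, h3, h4, h5⟩ |
      ⟨h2, hpar2, p, s, am, ai, ap, bi, bp, x', hp, ha, hb, h3, h4, h5⟩
    · subst ha; subst hb
      rw [fprod_odd _ _ hcpar, fprod_odd _ _ hcpar]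
      rcases c'.eq_nil_or_concat with hc' | ⟨c'', cm, hc'⟩
      · subst hc'
        exact ⟨1, x, hx, Or.inl ⟨rfl, cl * a1, a2, cl * b1, b2, s, by simp, by simp,
          by rw [mul_assoc, e1], e2⟩⟩
      · rw [List.concat_eq_append] at hc'; subst hc'
        have hbx : cl * b1 * x = cl * a1 := by rw [mul_assoc, e1]
        refine ⟨c''.length + 2, x, hx, Or.inr (Or.inr ⟨?_, ?_, c'', s, cm, cl * a1, a2,
          cl * b1, b2, 1, by simp, by simp, by simp, ?_, ?_, e2⟩)⟩
        · simp at hcpar; omega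
        · simp at hcpar; omega
        · rw [hbx]; exact isLeftLcm_self ⟨cl * b1, hbx⟩
        · rw [one_mul]; exact hbx
    · subst ha; subst hb
      cases p with
      | nil =>
        simp only [List.nil_append]
        rw [fprod_odd _ _ hcpar, fprod_odd _ _ hcpar]
        have hcl : (c'.length + 1) % 2 = 1 := by simpa using hcpar
        exact ⟨c'.length + 2, x, hx, Or.inr (Or.inl ⟨by omega, by omega, c', s,
          cl * am, ai, ap, bi, bp, x', by simp, by simp, by simp [mul_assoc], h3, h4, h5⟩)⟩
      | cons p0 pt =>
        simp only [List.cons_append]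
        rw [fprod_odd _ _ hcpar, fprod_odd _ _ hcpar]
        have hcl : (c'.length + 1) % 2 = 1 := by simpa using hcpar
        simp only [List.length_cons] at hp
        exact ⟨i + c'.length, x, hx, Or.inr (Or.inl ⟨by omega, by omega,
          c' ++ (cl * p0) :: pt, s, am, ai, ap, bi, bp, x', by simp; omega, by simp, by simp,
          h3, h4, h5⟩)⟩
    · subst ha; subst hb
      cases p with
      | nil => simp at hp; omega
      | cons p0 pt =>
        simp only [List.cons_append]
        rw [fprod_odd _ _ hcpar, fprod_odd _ _ hcpar]
        have hcl : (c'.length + 1) % 2 = 1 := by simpa using hcpar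
        simp only [List.length_cons] at hp
        exact ⟨i + c'.length, x, hx, Or.inr (Or.inr ⟨by omega, by omega,
          c' ++ (cl * p0) :: pt, s, am, ai, ap, bi, bp, x', by simp; omega, by simp, by simp,
          h3, h4, h5⟩)⟩
  · have hcl : (c'.length + 1) % 2 = 0 := by
      simp only [List.length_append, List.length_singleton] at hcpar; omega
    rw [fprod_even _ (by simpa using hcl), fprod_even _ (by simpa using hcl)]
    rcases hr with ⟨h1, a1, a2, b1, b2, s, ha, hb, e1, e2⟩ |
      ⟨h2, hpar2, p, s, am, ai, ap, bi, bp, x', hp, ha, hb, h3, h4, h5⟩ |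
      ⟨h2, hpar2, p, s, am, ai, ap, bi, bp, x', hp, ha, hb, h3, h4, h5⟩
    · subst ha; subst hb
      refine ⟨c'.length + 2, x, hx, Or.inr (Or.inr ⟨by omega, by omega, c', s, cl, a1, a2,
        b1, b2, 1, by simp, by simp, by simp, ?_, ?_, e2⟩)⟩
      · rw [e1]; exact isLeftLcm_self ⟨b1, e1⟩
      · rw [one_mul]; exact e1
    · subst ha; subst hb
      exact ⟨i + c'.length + 1, x, hx, Or.inr (Or.inl ⟨by omega, by omega,
        (c' ++ [cl]) ++ p, s, am, ai, ap, bi, bp, x', by simp; omega, by simp, by simp,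
        h3, h4, h5⟩)⟩
    · subst ha; subst hb
      exact ⟨i + c'.length + 1, x, hx, Or.inr (Or.inr ⟨by omega, by omega,
        (c' ++ [cl]) ++ p, s, am, ai, ap, bi, bp, x', by simp; omega, by simp, by simp,
        h3, h4, h5⟩)⟩


/-- `⇒*` is compatible with the multifraction product. -/
theorem stmt_10 {M : Type*} [Monoid M] (h : IsGcdMon M) {a b : List M}
    (hab : RedStar a b) (c : List M) :
    RedStar (fprod c a) (fprod c b) ∧ RedStar (fprod a c) (fprod b c) :=
  ⟨Relation.ReflTransGen.lift (fun y => fprod c y) (fun _ _ huv => red_fprod_left huv c) a b hab,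
   Relation.ReflTransGen.lift (fun y => fprod y c) (fun _ _ huv => red_fprod_right huv c) a b hab⟩

end MFR
end

section
/- If M is a noetherian gcd-monoid, the reduction rewrite system R_M on multifractions is terminating: there is no infinite sequence a⁰ ⇒ a¹ ⇒ a² ⇒ ⋯ of one-step reductions. -/
namespace MFR

variable {M : Type*} [Monoid M]

section Aux

/-- Well-foundedness from absence of infinite descending chains. -/
lemma wf_of_no_chain {α : Type*} {r : α → α → Prop}
    (h : ∀ f : ℕ → α, ¬ ∀ n, r (f (n+1)) (f n)) : WellFounded r := by
  by_contra hwf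
  have ha : ∃ a, ¬ Acc r a := by
    by_contra h'
    push_neg at h'
    exact hwf ⟨h'⟩
  obtain ⟨a, ha⟩ := ha
  have step : ∀ b : {x // ¬ Acc r x}, ∃ c : {x // ¬ Acc r x}, r c.1 b.1 := by
    rintro ⟨b, hb⟩
    by_contra hc
    push_neg at hc
    exact hb (Acc.intro b fun y hy => by_contra fun hy' => hc ⟨y, hy'⟩ hy)
  choose g hg using step
  exact h (fun n => (g^[n] ⟨a, ha⟩).1) fun n => by
    show r (g^[n+1] ⟨a, ha⟩).1 (g^[n] ⟨a, ha⟩).1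
    rw [Function.iterate_succ_apply']
    exact hg (g^[n] ⟨a, ha⟩)

lemma no_desc {α : Sort*} {r : α → α → Prop} (h : WellFounded r) (f : ℕ → α)
    (hf : ∀ n, r (f (n+1)) (f n)) : False := by
  have : ∀ a, ¬ ∃ n, f n = a := by
    intro a
    induction a using WellFounded.induction h with
    | _ a ih =>
      rintro ⟨n, rfl⟩
      exact ih (f (n+1)) (hf n) ⟨n+1, rfl⟩
  exact this (f 0) ⟨0, rfl⟩

/-- In a noetherian monoid with trivial units, the proper-factor relation is
well-founded. -/
lemma factor_wf (hu : ∀ a : M, IsUnit a → a = 1) (hn : Noeth M) : WellFounded (Factor (M := M)) := by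
  apply wf_of_no_chain
  intro f hf
  choose x y hxy hne using hf
  -- cumulative products
  let X : ℕ → M := fun n => Nat.rec 1 (fun k Xk => Xk * x k) n
  let Y : ℕ → M := fun n => Nat.rec 1 (fun k Yk => y k * Yk) n
  let R : ℕ → M := fun n => f n * Y n
  let L : ℕ → M := fun n => X n * f n
  have hR : ∀ n, x n * R (n+1) = R n := by
    intro n
    show x n * (f (n+1) * (y n * Y n)) = f n * Y n
    rw [← hxy n]
    simp [mul_assoc]
  have hL : ∀ n, L (n+1) * y n = L n := by
    intro n
    show (X n * x n) * f (n+1) * y n = X n * f n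
    rw [← hxy n]
    simp [mul_assoc]
  have key : ∀ n, Prod.Lex (PRDvd (M := M)) (PLDvd (M := M)) (R (n+1), L (n+1)) (R n, L n) := by
    intro n
    by_cases hx : IsUnit (x n)
    · have hx1 : x n = 1 := hu _ hx
      have hRe : R (n+1) = R n := by rw [← hR n, hx1, one_mul]
      have hy : ¬ IsUnit (y n) := by
        rcases hne n with h' | h'
        · exact absurd hx h'
        · exact h'
      rw [hRe]
      exact Prod.Lex.right _ ⟨y n, hy, hL n⟩
    · exact Prod.Lex.left _ _ ⟨x n, hx, hR n⟩
  exact no_desc (WellFounded.prod_lex hn.2 hn.1) (fun n => (R n, L n)) key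

/-- The anti-lexicographic step relation (stated on reversed lists, so in fact
lexicographic): common prefix, then a strict `r`-step. -/
def MyLex (r : M → M → Prop) (a b : List M) : Prop :=
  ∃ (p u v : List M) (x y : M),
    a = p ++ y :: v ∧ b = p ++ x :: u ∧ v.length = u.length ∧ r y x

lemma myLex_wf {r : M → M → Prop} (hr : WellFounded r) :
    ∀ L : ℕ, WellFounded (fun a b : {l : List M // l.length = L} => MyLex r a.1 b.1) := by
  intro L
  induction L with
  | zero =>
    constructor
    rintro ⟨l, hl⟩
    constructor
    rintro ⟨m, hm⟩ ⟨p, u, v, x, y, hm', hl', -, -⟩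
    exfalso
    apply (List.cons_ne_nil x u)
    have : l = p ++ x :: u := hl'
    have h0 : (p ++ x :: u).length = 0 := by rw [← this, hl]
    simp at h0
  | succ L ih =>
    have : WellFounded (InvImage (Prod.Lex r
        (fun a b : {l : List M // l.length = L} => MyLex r a.1 b.1))
        (fun l : {l : List M // l.length = L + 1} =>
          (l.1.headD 1, (⟨l.1.tail, by simp [l.2]⟩ : {l : List M // l.length = L})))) :=
      InvImage.wf _ (WellFounded.prod_lex hr ih)
    refine Subrelation.wf ?_ this
    rintro ⟨a, hA⟩ ⟨b, hB⟩ ⟨p, u, v, x, y, ha, hb, hlen, hr'⟩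
    dsimp [InvImage]
    cases p with
    | nil =>
      simp only [List.nil_append] at ha hb
      subst ha; subst hb
      exact Prod.Lex.left _ _ hr'
    | cons h' p' =>
      simp only [List.cons_append] at ha hb
      subst ha; subst hb
      simp only [List.headD_cons, List.tail_cons]
      exact Prod.Lex.right _ ⟨p', u, v, x, y, rfl, rfl, hlen, hr'⟩

/-- Every reduction step takes the form: common suffix, pivot entry replaced by a
proper factor, prefixes of equal length. -/
lemma red_step (hu : ∀ a : M, IsUnit a → a = 1) {a b : List M} (h : Red a b) :
    ∃ (u v t : List M) (x y : M),
      a = u ++ x :: t ∧ b = v ++ y :: t ∧ u.length = v.length ∧ Factor y x := by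
  obtain ⟨i, z, hz, hred⟩ := h
  have hz' : ¬ IsUnit z := fun hzu => hz (hu z hzu)
  rcases hred with ⟨-, a₁, a₂, b₁, b₂, s, ha, hb, h1, h2⟩ |
    ⟨-, -, p, s, am, ai, ap, bi, bp, x', hp, ha, hb, -, -, hx⟩ |
    ⟨-, -, p, s, am, ai, ap, bi, bp, x', hp, ha, hb, -, -, hx⟩
  · exact ⟨[a₁], [b₁], s, a₂, b₂, ha, hb, rfl, 1, z, by simpa using h2, Or.inr hz'⟩
  · exact ⟨p ++ [am, ai], p ++ [am * x', bi], s, ap, bp, by simp [ha], by simp [hb],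
      by simp, z, 1, by simpa using hx, Or.inl hz'⟩
  · exact ⟨p ++ [am, ai], p ++ [x' * am, bi], s, ap, bp, by simp [ha], by simp [hb],
      by simp, 1, z, by simpa using hx, Or.inr hz'⟩

lemma red_myLex (hu : ∀ a : M, IsUnit a → a = 1) {a b : List M} (h : Red a b) :
    a.length = b.length ∧ MyLex (Factor (M := M)) b.reverse a.reverse := by
  obtain ⟨u, v, t, x, y, ha, hb, hlen, hf⟩ := red_step hu h
  constructor
  · rw [ha, hb]; simp [hlen]
  · exact ⟨t.reverse, u.reverse, v.reverse, x, y, by simp [hb], by simp [ha],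
      by simp [hlen], hf⟩

end Aux

/-- over a noetherian gcd-monoid, reduction is terminating. -/
theorem stmt_11 {M : Type*} [Monoid M] (h : IsGcdMon M) (hn : Noeth M)
    (f : ℕ → List M) : ¬ (∀ n : ℕ, Red (f n) (f (n + 1))) := by
  intro hf
  have hu : ∀ a : M, IsUnit a → a = 1 := h.unit_eq_one
  have hlen : ∀ n, (f n).length = (f 0).length := by
    intro n
    induction n with
    | zero => rfl
    | succ n ih => rw [← (red_myLex hu (hf n)).1, ih]
  let g : ℕ → {l : List M // l.length = (f 0).length} :=
    fun n => ⟨(f n).reverse, by simp [hlen n]⟩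
  exact no_desc (myLex_wf (factor_wf hu hn) (f 0).length) g
    fun n => (red_myLex hu (hf n)).2

end MFR
end

section
/- In a gcd-monoid, if i is negative in the multifraction a, then (a • R_{i,x}) • R_{i,y} is defined if and only if a • R_{i,xy} is defined, and then they are equal; if i is positive, the same holds with R_{i,yx} in place of R_{i,xy}. -/
namespace MFR

variable {M : Type*} [Monoid M]

section AuxStmt12

variable {M : Type*} [Monoid M]

theorem aux_unit_one (h : IsGcdMon M) {w : M} (k : M) (hk : k * w = 1) : w = 1 := by
  have h2 : w * k = 1 := by
    apply h.mul_right_cancel w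
    rw [one_mul, mul_assoc, hk, mul_one]
  exact h.unit_eq_one w ⟨⟨w, k, h2, hk⟩, rfl⟩

theorem aux_unit_one' (h : IsGcdMon M) {w : M} (k : M) (hk : w * k = 1) : w = 1 := by
  have h2 : k * w = 1 := by
    apply h.mul_right_cancel k
    rw [one_mul, mul_assoc, hk, mul_one]
  exact aux_unit_one h k h2

theorem aux_exists_rightLcm (h : IsGcdMon M) {a b m : M}
    (ha : LeftDvd a m) (hb : LeftDvd b m) :
    ∃ u v, a * u = b * v ∧ IsRightLcm a b (a * u) := by
  obtain ⟨a', ha'⟩ := ha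
  obtain ⟨b', hb'⟩ := hb
  obtain ⟨g, ⟨u, hu⟩, ⟨v, hv⟩, hg3⟩ := h.exists_rightGcd a' b'
  have key : a * u = b * v := by
    apply h.mul_right_cancel g
    rw [mul_assoc, hu, ha', mul_assoc, hv, hb']
  refine ⟨u, v, key, ⟨u, rfl⟩, ⟨v, key.symm⟩, ?_⟩
  rintro m' ⟨p, hp⟩ ⟨q, hq⟩
  obtain ⟨d, ⟨w, hw⟩, hd2, hd3⟩ := h.exists_leftGcd (a * u) m'
  obtain ⟨u₁, hu₁⟩ := hd3 a ⟨u, rfl⟩ ⟨p, hp⟩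
  obtain ⟨v₁, hv₁⟩ := hd3 b ⟨v, key.symm⟩ ⟨q, hq⟩
  have h1 : u₁ * w = u := by
    apply h.mul_left_cancel a; rw [← mul_assoc, hu₁, hw]
  have h2 : v₁ * w = v := by
    apply h.mul_left_cancel b; rw [← mul_assoc, hv₁, hw, key]
  obtain ⟨k, hk⟩ := hg3 (w * g) ⟨u₁, by rw [← mul_assoc, h1, hu]⟩
    ⟨v₁, by rw [← mul_assoc, h2, hv]⟩
  have hkw : k * w = 1 := by
    apply h.mul_right_cancel g; rw [one_mul, mul_assoc, hk]
  have hw1 : w = 1 := aux_unit_one h k hkw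
  have hd : d = a * u := by rw [← hw, hw1, mul_one]
  rwa [← hd]

theorem aux_exists_leftLcm (h : IsGcdMon M) {a b m : M}
    (ha : RightDvd a m) (hb : RightDvd b m) :
    ∃ u v, u * a = v * b ∧ IsLeftLcm a b (u * a) := by
  obtain ⟨a', ha'⟩ := ha
  obtain ⟨b', hb'⟩ := hb
  obtain ⟨g, ⟨u, hu⟩, ⟨v, hv⟩, hg3⟩ := h.exists_leftGcd a' b'
  have key : u * a = v * b := by
    apply h.mul_left_cancel g
    rw [← mul_assoc, hu, ha', ← mul_assoc, hv, hb']
  refine ⟨u, v, key, ⟨u, rfl⟩, ⟨v, key.symm⟩, ?_⟩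
  rintro m' ⟨p, hp⟩ ⟨q, hq⟩
  obtain ⟨d, ⟨w, hw⟩, hd2, hd3⟩ := h.exists_rightGcd (u * a) m'
  obtain ⟨u₁, hu₁⟩ := hd3 a ⟨u, rfl⟩ ⟨p, hp⟩
  obtain ⟨v₁, hv₁⟩ := hd3 b ⟨v, key.symm⟩ ⟨q, hq⟩
  have h1 : w * u₁ = u := by
    apply h.mul_right_cancel a; rw [mul_assoc, hu₁, hw]
  have h2 : w * v₁ = v := by
    apply h.mul_right_cancel b; rw [mul_assoc, hv₁, hw, key]
  obtain ⟨k, hk⟩ := hg3 (g * w) ⟨u₁, by rw [mul_assoc, h1, hu]⟩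
    ⟨v₁, by rw [mul_assoc, h2, hv]⟩
  have hwk : w * k = 1 := by
    apply h.mul_left_cancel g; rw [← mul_assoc, hk, mul_one]
  have hw1 : w = 1 := aux_unit_one' h k hwk
  have hd : d = u * a := by rw [← hw, hw1, one_mul]
  rwa [← hd]

theorem aux_rightLcm_unique (h : IsGcdMon M) {a b m m' : M}
    (h1 : IsRightLcm a b m) (h2 : IsRightLcm a b m') : m = m' := by
  obtain ⟨s, hs⟩ := h1.2.2 m' h2.1 h2.2.1
  obtain ⟨t, ht⟩ := h2.2.2 m h1.1 h1.2.1
  have hst : s * t = 1 := by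
    apply h.mul_left_cancel m; rw [← mul_assoc, hs, ht, mul_one]
  have ht1 : t = 1 := aux_unit_one h s hst
  rw [← ht, ht1, mul_one]

theorem aux_leftLcm_unique (h : IsGcdMon M) {a b m m' : M}
    (h1 : IsLeftLcm a b m) (h2 : IsLeftLcm a b m') : m = m' := by
  obtain ⟨s, hs⟩ := h1.2.2 m' h2.1 h2.2.1
  obtain ⟨t, ht⟩ := h2.2.2 m h1.1 h1.2.1
  have hts : t * s = 1 := by
    apply h.mul_right_cancel m; rw [one_mul, mul_assoc, hs, ht]
  have hs1 : s = 1 := aux_unit_one h t hts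
  rw [← hs, hs1, one_mul]

theorem aux_rightLcm_iter (h : IsGcdMon M) {x y ai bi ci x' y' : M}
    (h1 : IsRightLcm x ai (x * bi)) (e1 : x * bi = ai * x')
    (h2 : IsRightLcm y bi (y * ci)) (e2 : y * ci = bi * y') :
    IsRightLcm (x * y) ai ((x * y) * ci) ∧ (x * y) * ci = ai * (x' * y') := by
  have key : (x * y) * ci = ai * (x' * y') := by
    rw [mul_assoc, e2, ← mul_assoc, e1, mul_assoc]
  refine ⟨⟨⟨ci, rfl⟩, ⟨x' * y', key.symm⟩, ?_⟩, key⟩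
  rintro m ⟨p, hp⟩ ⟨q, hq⟩
  obtain ⟨w, hw⟩ := h1.2.2 m ⟨y * p, by rw [← mul_assoc]; exact hp⟩ ⟨q, hq⟩
  have hbw : bi * w = y * p := by
    apply h.mul_left_cancel x
    rw [← mul_assoc, hw, ← hp, mul_assoc]
  obtain ⟨v, hv⟩ := h2.2.2 (bi * w) ⟨p, hbw.symm⟩ ⟨w, rfl⟩
  refine ⟨v, ?_⟩
  rw [mul_assoc x y ci, mul_assoc x (y * ci) v, hv, ← mul_assoc x bi w, hw]

theorem aux_leftLcm_iter (h : IsGcdMon M) {x y ai bi ci x' y' : M}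
    (h1 : IsLeftLcm x ai (bi * x)) (e1 : bi * x = x' * ai)
    (h2 : IsLeftLcm y bi (ci * y)) (e2 : ci * y = y' * bi) :
    IsLeftLcm (y * x) ai (ci * (y * x)) ∧ ci * (y * x) = (y' * x') * ai := by
  have key : ci * (y * x) = (y' * x') * ai := by
    rw [← mul_assoc, e2, mul_assoc, e1, ← mul_assoc]
  refine ⟨⟨⟨ci, rfl⟩, ⟨y' * x', key.symm⟩, ?_⟩, key⟩
  rintro m ⟨p, hp⟩ ⟨q, hq⟩
  obtain ⟨w, hw⟩ := h1.2.2 m ⟨p * y, by rw [mul_assoc]; exact hp⟩ ⟨q, hq⟩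
  have hbw : w * bi = p * y := by
    apply h.mul_right_cancel x
    rw [mul_assoc, hw, ← hp, ← mul_assoc]
  obtain ⟨v, hv⟩ := h2.2.2 (w * bi) ⟨p, hbw.symm⟩ ⟨w, rfl⟩
  refine ⟨v, ?_⟩
  rw [← mul_assoc ci y x, ← mul_assoc v (ci * y) x, hv, mul_assoc w bi x, hw]

theorem aux_decomp3 {p p' s s' : List M} {a1 a2 a3 b1 b2 b3 : M}
    (hl : p.length = p'.length)
    (he : p ++ a1 :: a2 :: a3 :: s = p' ++ b1 :: b2 :: b3 :: s') :
    p = p' ∧ a1 = b1 ∧ a2 = b2 ∧ a3 = b3 ∧ s = s' := by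
  obtain ⟨h1, h2⟩ := List.append_inj he hl
  injection h2 with ha h2
  injection h2 with hb h2
  injection h2 with hc h2
  exact ⟨h1, ha, hb, hc, h2⟩

def EvenRed (i : ℕ) (x : M) (a b : List M) : Prop :=
  ∃ (p s : List M) (am ai ap bi bp x' : M),
    p.length = i - 2 ∧
    a = p ++ am :: ai :: ap :: s ∧
    b = p ++ (am * x') :: bi :: bp :: s ∧
    IsRightLcm x ai (x * bi) ∧ x * bi = ai * x' ∧ x * bp = ap

def OddRed (i : ℕ) (x : M) (a b : List M) : Prop :=
  ∃ (p s : List M) (am ai ap bi bp x' : M),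
    p.length = i - 2 ∧
    a = p ++ am :: ai :: ap :: s ∧
    b = p ++ (x' * am) :: bi :: bp :: s ∧
    IsLeftLcm x ai (bi * x) ∧ bi * x = x' * ai ∧ bp * x = ap

def OneRed (x : M) (a b : List M) : Prop :=
  ∃ (a₁ a₂ b₁ b₂ : M) (s : List M),
    a = a₁ :: a₂ :: s ∧ b = b₁ :: b₂ :: s ∧ b₁ * x = a₁ ∧ b₂ * x = a₂

theorem reduce_even_iff {i : ℕ} (hi : i % 2 = 0) {x : M} {a b : List M} :
    Reduce i x a b ↔ 2 ≤ i ∧ EvenRed i x a b := by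
  unfold Reduce EvenRed
  constructor
  · rintro (⟨h1, _⟩ | ⟨h2, _, hr⟩ | ⟨h3, ho, _⟩)
    · omega
    · exact ⟨h2, hr⟩
    · omega
  · rintro ⟨h2, hr⟩
    exact Or.inr (Or.inl ⟨h2, hi, hr⟩)

theorem reduce_odd_iff {i : ℕ} (hi : i % 2 = 1) {x : M} {a b : List M} :
    Reduce i x a b ↔ (i = 1 ∧ OneRed x a b) ∨ (3 ≤ i ∧ OddRed i x a b) := by
  unfold Reduce OneRed OddRed
  constructor
  · rintro (⟨h1, hr⟩ | ⟨h2, he, _⟩ | ⟨h3, _, hr⟩)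
    · exact Or.inl ⟨h1, hr⟩
    · omega
    · exact Or.inr ⟨h3, hr⟩
  · rintro (⟨h1, hr⟩ | ⟨h3, hr⟩)
    · exact Or.inl ⟨h1, hr⟩
    · exact Or.inr (Or.inr ⟨h3, hi, hr⟩)

theorem even_comp (h : IsGcdMon M) {i : ℕ} {x y : M} {a b c : List M}
    (hab : EvenRed i x a b) (hbc : EvenRed i y b c) : EvenRed i (x * y) a c := by
  obtain ⟨p, s, am, ai, ap, bi, bp, x', hp, ha, hb, hlcm, heq, hbp⟩ := hab
  obtain ⟨p₂, s₂, am₂, ai₂, ap₂, ci, cp, y', hp₂, hb₂, hc, hlcm₂, heq₂, hcp⟩ := hbc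
  obtain ⟨hpp, ham, hai, hap, hs⟩ := aux_decomp3 (hp.trans hp₂.symm) (hb.symm.trans hb₂)
  subst hpp; subst ham; subst hai; subst hap; subst hs
  obtain ⟨hlcm3, heq3⟩ := aux_rightLcm_iter h hlcm heq hlcm₂ heq₂
  refine ⟨p, s, am, ai, ap, ci, cp, x' * y', hp, ha, ?_, hlcm3, heq3, ?_⟩
  · rw [hc, mul_assoc]
  · rw [mul_assoc, hcp, hbp]

theorem even_split (h : IsGcdMon M) {i : ℕ} {x y : M} {a c : List M}
    (hac : EvenRed i (x * y) a c) : ∃ b c₂, EvenRed i x a b ∧ EvenRed i y b c₂ := by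
  obtain ⟨p, s, am, ai, ap, ci, cp, z', hp, ha, hc, hlcm, heq, hcp⟩ := hac
  obtain ⟨bi, x', hxb, hlcm1⟩ := aux_exists_rightLcm h (a := x) (b := ai)
    (m := (x * y) * ci) ⟨y * ci, (mul_assoc x y ci).symm⟩ ⟨z', heq.symm⟩
  obtain ⟨w, hw⟩ := hlcm1.2.2 ((x * y) * ci) ⟨y * ci, (mul_assoc x y ci).symm⟩ ⟨z', heq.symm⟩
  have hbw : bi * w = y * ci := by
    apply h.mul_left_cancel x
    rw [← mul_assoc, hw, mul_assoc]
  obtain ⟨ci₂, y', hyc, hlcm2⟩ := aux_exists_rightLcm h (a := y) (b := bi)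
    (m := y * ci) ⟨ci, rfl⟩ ⟨w, hbw⟩
  refine ⟨p ++ (am * x') :: bi :: (y * cp) :: s, _,
    ⟨p, s, am, ai, ap, bi, y * cp, x', hp, ha, rfl, hlcm1, hxb, ?_⟩,
    ⟨p, s, am * x', bi, y * cp, ci₂, cp, y', hp, rfl, rfl, hlcm2, hyc, rfl⟩⟩
  rw [← mul_assoc]; exact hcp

theorem even_det (h : IsGcdMon M) {i : ℕ} {z : M} {a c c' : List M}
    (h1 : EvenRed i z a c) (h2 : EvenRed i z a c') : c = c' := by
  obtain ⟨p, s, am, ai, ap, ci, cp, x', hp, ha, hc, hlcm, heq, hcp⟩ := h1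
  obtain ⟨p₂, s₂, am₂, ai₂, ap₂, ci₂, cp₂, x₂', hp₂, ha₂, hc₂, hlcm₂, heq₂, hcp₂⟩ := h2
  obtain ⟨hpp, ham, hai, hap, hs⟩ := aux_decomp3 (hp.trans hp₂.symm) (ha.symm.trans ha₂)
  subst hpp; subst ham; subst hai; subst hap; subst hs
  have hm : z * ci = z * ci₂ := aux_rightLcm_unique h hlcm hlcm₂
  have hci : ci = ci₂ := h.mul_left_cancel z _ _ hm
  have hx' : x' = x₂' := h.mul_left_cancel ai _ _ (by rw [← heq, ← heq₂, hci])
  have hcpe : cp = cp₂ := h.mul_left_cancel z _ _ (by rw [hcp, hcp₂])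
  rw [hc, hc₂, hci, hx', hcpe]

theorem odd_comp (h : IsGcdMon M) {i : ℕ} {x y : M} {a b c : List M}
    (hab : OddRed i x a b) (hbc : OddRed i y b c) : OddRed i (y * x) a c := by
  obtain ⟨p, s, am, ai, ap, bi, bp, x', hp, ha, hb, hlcm, heq, hbp⟩ := hab
  obtain ⟨p₂, s₂, am₂, ai₂, ap₂, ci, cp, y', hp₂, hb₂, hc, hlcm₂, heq₂, hcp⟩ := hbc
  obtain ⟨hpp, ham, hai, hap, hs⟩ := aux_decomp3 (hp.trans hp₂.symm) (hb.symm.trans hb₂)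
  subst hpp; subst ham; subst hai; subst hap; subst hs
  obtain ⟨hlcm3, heq3⟩ := aux_leftLcm_iter h hlcm heq hlcm₂ heq₂
  refine ⟨p, s, am, ai, ap, ci, cp, y' * x', hp, ha, ?_, hlcm3, heq3, ?_⟩
  · rw [hc, ← mul_assoc]
  · rw [← mul_assoc, hcp, hbp]

theorem odd_split (h : IsGcdMon M) {i : ℕ} {x y : M} {a c : List M}
    (hac : OddRed i (y * x) a c) : ∃ b c₂, OddRed i x a b ∧ OddRed i y b c₂ := by
  obtain ⟨p, s, am, ai, ap, ci, cp, z', hp, ha, hc, hlcm, heq, hcp⟩ := hac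
  obtain ⟨bi, x', hxb, hlcm1⟩ := aux_exists_leftLcm h (a := x) (b := ai)
    (m := ci * (y * x)) ⟨ci * y, mul_assoc ci y x⟩ ⟨z', heq.symm⟩
  obtain ⟨w, hw⟩ := hlcm1.2.2 (ci * (y * x)) ⟨ci * y, mul_assoc ci y x⟩ ⟨z', heq.symm⟩
  have hbw : w * bi = ci * y := by
    apply h.mul_right_cancel x
    rw [mul_assoc, hw, ← mul_assoc]
  obtain ⟨ci₂, y', hyc, hlcm2⟩ := aux_exists_leftLcm h (a := y) (b := bi)
    (m := ci * y) ⟨ci, rfl⟩ ⟨w, hbw⟩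
  refine ⟨p ++ (x' * am) :: bi :: (cp * y) :: s, _,
    ⟨p, s, am, ai, ap, bi, cp * y, x', hp, ha, rfl, hlcm1, hxb, ?_⟩,
    ⟨p, s, x' * am, bi, cp * y, ci₂, cp, y', hp, rfl, rfl, hlcm2, hyc, rfl⟩⟩
  rw [mul_assoc]; exact hcp

theorem odd_det (h : IsGcdMon M) {i : ℕ} {z : M} {a c c' : List M}
    (h1 : OddRed i z a c) (h2 : OddRed i z a c') : c = c' := by
  obtain ⟨p, s, am, ai, ap, ci, cp, x', hp, ha, hc, hlcm, heq, hcp⟩ := h1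
  obtain ⟨p₂, s₂, am₂, ai₂, ap₂, ci₂, cp₂, x₂', hp₂, ha₂, hc₂, hlcm₂, heq₂, hcp₂⟩ := h2
  obtain ⟨hpp, ham, hai, hap, hs⟩ := aux_decomp3 (hp.trans hp₂.symm) (ha.symm.trans ha₂)
  subst hpp; subst ham; subst hai; subst hap; subst hs
  have hm : ci * z = ci₂ * z := aux_leftLcm_unique h hlcm hlcm₂
  have hci : ci = ci₂ := h.mul_right_cancel z _ _ hm
  have hx' : x' = x₂' := h.mul_right_cancel ai _ _ (by rw [← heq, ← heq₂, hci])
  have hcpe : cp = cp₂ := h.mul_right_cancel z _ _ (by rw [hcp, hcp₂])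
  rw [hc, hc₂, hci, hx', hcpe]

theorem one_comp {x y : M} {a b c : List M}
    (hab : OneRed x a b) (hbc : OneRed y b c) : OneRed (y * x) a c := by
  obtain ⟨a₁, a₂, b₁, b₂, s, ha, hb, h1, h2⟩ := hab
  obtain ⟨d₁, d₂, c₁, c₂, t, hb₂, hc, h1', h2'⟩ := hbc
  rw [hb] at hb₂
  injection hb₂ with e1 hb₂
  injection hb₂ with e2 e3
  subst e1; subst e2; subst e3
  refine ⟨a₁, a₂, c₁, c₂, s, ha, hc, ?_, ?_⟩
  · rw [← mul_assoc, h1', h1]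
  · rw [← mul_assoc, h2', h2]

theorem one_split {x y : M} {a c : List M}
    (hac : OneRed (y * x) a c) : ∃ b c₂, OneRed x a b ∧ OneRed y b c₂ := by
  obtain ⟨a₁, a₂, c₁, c₂, s, ha, hc, h1, h2⟩ := hac
  exact ⟨(c₁ * y) :: (c₂ * y) :: s, c,
    ⟨a₁, a₂, c₁ * y, c₂ * y, s, ha, rfl, by rw [mul_assoc]; exact h1,
      by rw [mul_assoc]; exact h2⟩,
    ⟨c₁ * y, c₂ * y, c₁, c₂, s, rfl, hc, rfl, rfl⟩⟩

theorem one_det (h : IsGcdMon M) {z : M} {a c c' : List M}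
    (h1 : OneRed z a c) (h2 : OneRed z a c') : c = c' := by
  obtain ⟨a₁, a₂, b₁, b₂, s, ha, hc, e1, e2⟩ := h1
  obtain ⟨a₁', a₂', b₁', b₂', s', ha', hc', e1', e2'⟩ := h2
  rw [ha] at ha'
  injection ha' with f1 ha'
  injection ha' with f2 f3
  subst f1; subst f2; subst f3
  have g1 : b₁ = b₁' := h.mul_right_cancel z _ _ (by rw [e1, e1'])
  have g2 : b₂ = b₂' := h.mul_right_cancel z _ _ (by rw [e2, e2'])
  rw [hc, hc', g1, g2]

end AuxStmt12

/-- composition of two reductions at the same level. -/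
theorem stmt_12 {M : Type*} [Monoid M] (h : IsGcdMon M) (i : ℕ) (x y : M)
    (a : List M) :
    (i % 2 = 0 →
      ((∃ b c, Reduce i x a b ∧ Reduce i y b c) ↔ ∃ c, Reduce i (x * y) a c) ∧
      (∀ b c c', Reduce i x a b → Reduce i y b c → Reduce i (x * y) a c' →
        c = c')) ∧
    (i % 2 = 1 →
      ((∃ b c, Reduce i x a b ∧ Reduce i y b c) ↔ ∃ c, Reduce i (y * x) a c) ∧
      (∀ b c c', Reduce i x a b → Reduce i y b c → Reduce i (y * x) a c' →
        c = c')) := by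
  constructor
  · intro hi
    constructor
    · constructor
      · rintro ⟨b, c, hab, hbc⟩
        obtain ⟨h2, hab'⟩ := (reduce_even_iff hi).1 hab
        obtain ⟨-, hbc'⟩ := (reduce_even_iff hi).1 hbc
        exact ⟨c, (reduce_even_iff hi).2 ⟨h2, even_comp h hab' hbc'⟩⟩
      · rintro ⟨c, hac⟩
        obtain ⟨h2, hac'⟩ := (reduce_even_iff hi).1 hac
        obtain ⟨b, c₂, hb1, hb2⟩ := even_split h hac'
        exact ⟨b, c₂, (reduce_even_iff hi).2 ⟨h2, hb1⟩, (reduce_even_iff hi).2 ⟨h2, hb2⟩⟩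
    · intro b c c' hab hbc hac'
      obtain ⟨h2, hab'⟩ := (reduce_even_iff hi).1 hab
      obtain ⟨-, hbc'⟩ := (reduce_even_iff hi).1 hbc
      obtain ⟨-, hac''⟩ := (reduce_even_iff hi).1 hac'
      exact even_det h (even_comp h hab' hbc') hac''
  · intro hi
    constructor
    · constructor
      · rintro ⟨b, c, hab, hbc⟩
        rcases (reduce_odd_iff hi).1 hab with ⟨h1, hab'⟩ | ⟨h3, hab'⟩ <;>
          rcases (reduce_odd_iff hi).1 hbc with ⟨h1', hbc'⟩ | ⟨h3', hbc'⟩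
        · exact ⟨c, (reduce_odd_iff hi).2 (Or.inl ⟨h1, one_comp hab' hbc'⟩)⟩
        · omega
        · omega
        · exact ⟨c, (reduce_odd_iff hi).2 (Or.inr ⟨h3, odd_comp h hab' hbc'⟩)⟩
      · rintro ⟨c, hac⟩
        rcases (reduce_odd_iff hi).1 hac with ⟨h1, hac'⟩ | ⟨h3, hac'⟩
        · obtain ⟨b, c₂, hb1, hb2⟩ := one_split hac'
          exact ⟨b, c₂, (reduce_odd_iff hi).2 (Or.inl ⟨h1, hb1⟩),
            (reduce_odd_iff hi).2 (Or.inl ⟨h1, hb2⟩)⟩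
        · obtain ⟨b, c₂, hb1, hb2⟩ := odd_split h hac'
          exact ⟨b, c₂, (reduce_odd_iff hi).2 (Or.inr ⟨h3, hb1⟩),
            (reduce_odd_iff hi).2 (Or.inr ⟨h3, hb2⟩)⟩
    · intro b c c' hab hbc hac'
      rcases (reduce_odd_iff hi).1 hab with ⟨h1, hab'⟩ | ⟨h3, hab'⟩ <;>
        rcases (reduce_odd_iff hi).1 hbc with ⟨h1', hbc'⟩ | ⟨h3', hbc'⟩ <;>
        rcases (reduce_odd_iff hi).1 hac' with ⟨h1'', hac''⟩ | ⟨h3'', hac''⟩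
      · exact one_det h (one_comp hab' hbc') hac''
      · omega
      · omega
      · omega
      · omega
      · omega
      · omega
      · exact odd_det h (odd_comp h hab' hbc') hac''


end MFR
end
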